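/- In the matroid M(Υ) of a gain signed graph, an edge set containing two distinct hyperfrustrated edge components is dependent. -/

import Mathlib

/- A formalization framework for gain signed graphs (Anderson–Su–Zaslavsky).
A graph may have links/loops (ordered pair of endpoints), half edges and loose
edges.  Edges carry a sign, an orientation (a sign at each end) and a gain in an
abelian group, recorded relative to the stored orientation. -/

namespace GSG

inductive EdgeEnds (V : Type*) where
  | link : V → V → EdgeEnds V
  | half : V → EdgeEnds V
  | loose : EdgeEnds V

/-- A gain signed graph (data part; well-formedness is `Proper`). -/
structure GSGraph (V E G : Type*) [AddCommGroup G] where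
  shape : E → EdgeEnds V
  sign : E → ℤˣ
  tau1 : E → ℤˣ
  tau2 : E → ℤˣ
  gain : E → G

/-- A directed step: an edge traversed forwards or backwards
(relative to the recorded order of its endpoints). -/
structure DStep (E : Type*) where
  edge : E
  fwd : Bool

/-- The reverse of a walk. -/
def revWalk {E : Type*} (W : List (DStep E)) : List (DStep E) :=
  (W.map fun d => ⟨d.edge, !d.fwd⟩).reverse

/-- The edge set of a walk. -/
def stepEdges {E : Type*} (W : List (DStep E)) : Set E := {e | e ∈ W.map DStep.edge}

/-- An ultrawalk: a walk together with an optional initial and final half edge. -/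
structure UWalk (V E : Type*) where
  firstHalf : Option E
  startV : V
  steps : List (DStep E)
  endV : V
  lastHalf : Option E

/-- The edge set of an ultrawalk. -/
def uedges {V E : Type*} (W : UWalk V E) : Set E :=
  {e | W.firstHalf = some e ∨ e ∈ W.steps.map DStep.edge ∨ W.lastHalf = some e}

namespace GSGraph

variable {V E G : Type*} [AddCommGroup G] (Υ : GSGraph V E G)

/-- Well-formedness: the two end-signs of a link or loop multiply to minus the
edge sign; half edges are negative; loose edges are positive. -/
def Proper : Prop :=
  (∀ e v w, Υ.shape e = .link v w → Υ.tau1 e * Υ.tau2 e = - Υ.sign e) ∧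
  (∀ e v, Υ.shape e = .half v → Υ.sign e = -1) ∧
  (∀ e, Υ.shape e = .loose → Υ.sign e = 1)

/-- Source vertex of a directed step (defined for links/loops). -/
def srcO (d : DStep E) : Option V :=
  match Υ.shape d.edge with
  | .link v w => some (if d.fwd then v else w)
  | _ => none

/-- Target vertex of a directed step. -/
def tgtO (d : DStep E) : Option V :=
  match Υ.shape d.edge with
  | .link v w => some (if d.fwd then w else v)
  | _ => none

/-- The orientation sign at the source end of a step. -/
def tauSrc (d : DStep E) : ℤˣ := if d.fwd then Υ.tau1 d.edge else Υ.tau2 d.edge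

/-- The orientation sign at the target end of a step. -/
def tauTgt (d : DStep E) : ℤˣ := if d.fwd then Υ.tau2 d.edge else Υ.tau1 d.edge

/-- `W` is a walk: all its edges are links or loops and consecutive steps chain. -/
def IsSteps (W : List (DStep E)) : Prop :=
  (∀ d ∈ W, ∃ v w, Υ.shape d.edge = .link v w) ∧
  List.Chain' (fun a b => Υ.tgtO a = Υ.srcO b) W

def headSrc (W : List (DStep E)) : Option V := W.head?.bind Υ.srcO

def lastTgt (W : List (DStep E)) : Option V := W.getLast?.bind Υ.tgtO

/-- The sign of a walk: product of edge signs. -/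
def walkSign (W : List (DStep E)) : ℤˣ := (W.map fun d => Υ.sign d.edge).prod

/-- The gain of a walk:
`φ(W) = −∑ φ(eᵢ)·σ(W_{0,i−1})·τ(u_{i−1},eᵢ)`, in recursive form. -/
def walkGain : List (DStep E) → G
  | [] => 0
  | d :: rest =>
      -((Υ.tauSrc d : ℤ) • Υ.gain d.edge) + (Υ.sign d.edge : ℤ) • walkGain rest

def stepVerts (W : List (DStep E)) : Set V := {v | some v ∈ W.map Υ.srcO}

def pathVerts (W : List (DStep E)) : Set V :=
  Υ.stepVerts W ∪ {v | some v = Υ.lastTgt W}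

/-- `W` is a (possibly empty) walk from `u` to `v`. -/
def FromTo (W : List (DStep E)) (u v : V) : Prop :=
  (W = [] → u = v) ∧ (W ≠ [] → Υ.headSrc W = some u ∧ Υ.lastTgt W = some v)

/-- A closed walk tracing a circle: no repeated edges, no repeated vertices. -/
def IsCircleWalk (W : List (DStep E)) : Prop :=
  W ≠ [] ∧ Υ.IsSteps W ∧ Υ.lastTgt W = Υ.headSrc W ∧
  (W.map DStep.edge).Nodup ∧ (W.map Υ.srcO).Nodup

/-- A walk tracing a path: no repeated edges or vertices. -/
def IsPathWalk (W : List (DStep E)) : Prop :=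
  Υ.IsSteps W ∧ (W.map DStep.edge).Nodup ∧
  (W.map Υ.srcO ++ [Υ.lastTgt W]).Nodup

/-- Well-formedness of an ultrawalk. -/
def IsUWalk (W : UWalk V E) : Prop :=
  Υ.IsSteps W.steps ∧ Υ.FromTo W.steps W.startV W.endV ∧
  (∀ e, W.firstHalf = some e → Υ.shape e = .half W.startV) ∧
  (∀ e, W.lastHalf = some e → Υ.shape e = .half W.endV)

/-- The gain of an ultrawalk:
`φ(W) = τ(u₀,e₀)φ(e₀) + φ(W₀ₗ) − φ(e_{l+1})·σ(W₀ₗ)·τ(u_l,e_{l+1})`. -/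
def ugain (W : UWalk V E) : G :=
  (match W.firstHalf with
   | some e => (Υ.tau1 e : ℤ) • Υ.gain e
   | none => 0)
  + Υ.walkGain W.steps
  + (match W.lastHalf with
     | some e => -(((Υ.walkSign W.steps * Υ.tau1 e : ℤˣ) : ℤ) • Υ.gain e)
     | none => 0)

/-- A circuit walk around a positive circle. -/
def IsPosCircleWalk (W : UWalk V E) : Prop :=
  W.firstHalf = none ∧ W.lastHalf = none ∧ Υ.IsCircleWalk W.steps ∧
  Υ.walkSign W.steps = 1 ∧ Υ.headSrc W.steps = some W.startV ∧ W.endV = W.startV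

/-- A circuit walk around a handcuff whose two figures (circles or half edges)
have signs `s₁` and `s₂` (a half-edge figure counts as sign `-1`).  The three
cases: circle–circle, half-edge–circle, half-edge–half-edge. -/
def IsHandcuffWalk (s₁ s₂ : ℤˣ) (W : UWalk V E) : Prop :=
  (∃ W₁ P W₂ u₁ u₂,
    W.firstHalf = none ∧ W.lastHalf = none ∧
    W.steps = W₁ ++ P ++ W₂ ++ revWalk P ∧
    Υ.IsSteps W.steps ∧
    Υ.IsCircleWalk W₁ ∧ Υ.walkSign W₁ = s₁ ∧ Υ.headSrc W₁ = some u₁ ∧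
    Υ.IsCircleWalk W₂ ∧ Υ.walkSign W₂ = s₂ ∧ Υ.headSrc W₂ = some u₂ ∧
    Υ.IsPathWalk P ∧ Υ.FromTo P u₁ u₂ ∧
    W.startV = u₁ ∧ W.endV = u₁ ∧
    (∀ x, x ∈ Υ.stepVerts W₁ → x ∈ Υ.stepVerts W₂ → P = [] ∧ x = u₁) ∧
    (∀ x, x ∈ Υ.pathVerts P →
      (x ∈ Υ.stepVerts W₁ → x = u₁) ∧ (x ∈ Υ.stepVerts W₂ → x = u₂)) ∧
    ((W₁ ++ P ++ W₂).map DStep.edge).Nodup) ∨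
  (∃ e₁ P W₂ u₂,
    W.firstHalf = some e₁ ∧ W.lastHalf = some e₁ ∧
    Υ.shape e₁ = .half W.startV ∧ W.endV = W.startV ∧ s₁ = -1 ∧
    W.steps = P ++ W₂ ++ revWalk P ∧ Υ.IsSteps W.steps ∧
    Υ.IsCircleWalk W₂ ∧ Υ.walkSign W₂ = s₂ ∧ Υ.headSrc W₂ = some u₂ ∧
    Υ.IsPathWalk P ∧ Υ.FromTo P W.startV u₂ ∧
    (∀ x, x ∈ Υ.pathVerts P → x ∈ Υ.stepVerts W₂ → x = u₂) ∧
    (W.startV ∈ Υ.stepVerts W₂ → P = []) ∧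
    ((P ++ W₂).map DStep.edge).Nodup) ∨
  (∃ e₁ e₂,
    W.firstHalf = some e₁ ∧ W.lastHalf = some e₂ ∧ e₁ ≠ e₂ ∧
    Υ.shape e₁ = .half W.startV ∧ Υ.shape e₂ = .half W.endV ∧
    s₁ = -1 ∧ s₂ = -1 ∧
    Υ.IsPathWalk W.steps ∧ Υ.FromTo W.steps W.startV W.endV)

/-- A circuit walk of a sign circuit: a positive circle, or a handcuff of two
negative figures (loose-edge circuits are handled separately). -/
def IsSignCircuitWalk (W : UWalk V E) : Prop :=
  Υ.IsPosCircleWalk W ∨ Υ.IsHandcuffWalk (-1) (-1) W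

/-- `C` is a sign circuit: a loose edge, a positive circle, or a handcuff of
two negative figures joined by a minimal path. -/
def SignCircuit (C : Set E) : Prop :=
  (∃ e, Υ.shape e = .loose ∧ C = {e}) ∨
  (∃ W : UWalk V E, Υ.IsSignCircuitWalk W ∧ uedges W = C)

/-- `C` is neutral: every way of computing its gain gives `0`. -/
def NeutralOn (C : Set E) : Prop :=
  (∀ e, Υ.shape e = .loose → C = {e} → Υ.gain e = 0) ∧
  (∀ W : UWalk V E, Υ.IsSignCircuitWalk W → uedges W = C → Υ.ugain W = 0)

/-- An edge set is hyperbalanced if every sign circuit contained in it is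
neutral. -/
def Hyperbalanced (S : Set E) : Prop :=
  ∀ C, C ⊆ S → Υ.SignCircuit C → Υ.NeutralOn C

/-- Adjacency through an edge of `S`. -/
def joined (S : Set E) (a b : V) : Prop :=
  ∃ e ∈ S, Υ.shape e = .link a b ∨ Υ.shape e = .link b a

/-- Connectivity in the spanning subgraph `(V, S)`. -/
def conn (S : Set E) : V → V → Prop := Relation.ReflTransGen (Υ.joined S)

/-- The vertex component of `v` in `(V, S)`. -/
def comp (S : Set E) (v : V) : Set V := {w | Υ.conn S v w}

/-- Incidence of an edge with a vertex. -/
def touches (e : E) (v : V) : Prop :=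
  match Υ.shape e with
  | .link a b => v = a ∨ v = b
  | .half a => v = a
  | .loose => False

/-- The component of `v` in `(V,S)` is sign-balanced: it contains no half edge
and no negative circle. -/
def BalancedAt (S : Set E) (v : V) : Prop :=
  (∀ e ∈ S, ∀ u, Υ.shape e = .half u → ¬ Υ.conn S v u) ∧
  (∀ W : List (DStep E), Υ.IsCircleWalk W → (∀ d ∈ W, d.edge ∈ S) →
     (∃ u, Υ.headSrc W = some u ∧ Υ.conn S v u) → Υ.walkSign W = 1)

/-- Number of sign-balanced components of `(V,S)`. -/
noncomputable def bBal (S : Set E) : ℕ :=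
  Nat.card {X : Set V // ∃ v, X = Υ.comp S v ∧ Υ.BalancedAt S v}

/-- Number of components of `(V,S)`. -/
noncomputable def nComp (S : Set E) : ℕ :=
  Nat.card {X : Set V // ∃ v, X = Υ.comp S v}

/-- `δ(S)`: 0 if `S` is hyperbalanced, 1 if hyperfrustrated. -/
noncomputable def delta (S : Set E) : ℕ := by
  classical exact if Υ.Hyperbalanced S then 0 else 1

/-- The rank function of the matroid `M(Υ)`:
`rk(S) = n − b_Σ(S) + δ_Υ(S)`. -/
noncomputable def rk [Fintype V] (S : Set E) : ℕ :=
  Fintype.card V - Υ.bBal S + Υ.delta S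

/-- Matroid closure with respect to `rk`. -/
noncomputable def cl [Fintype V] (S : Set E) : Set E :=
  {e | Υ.rk (insert e S) = Υ.rk S}

/-- Two edges of `S` lie in the same edge component of `S`. -/
def econn (S : Set E) (e f : E) : Prop :=
  e ∈ S ∧ f ∈ S ∧ (e = f ∨ ∃ v w, Υ.touches e v ∧ Υ.touches f w ∧ Υ.conn S v w)

/-- `C` is an edge component of `S`. -/
def EdgeComponent (S C : Set E) : Prop := ∃ e ∈ S, C = {f | Υ.econn S e f}

/-- Sign switching by `ζ : V → {±1}`. -/
def signSwitch (ζ : V → ℤˣ) : GSGraph V E G where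
  shape := Υ.shape
  sign := fun e =>
    match Υ.shape e with
    | .link v w => ζ v * Υ.sign e * ζ w
    | _ => Υ.sign e
  tau1 := fun e =>
    match Υ.shape e with
    | .link v _ => ζ v * Υ.tau1 e
    | .half v => ζ v * Υ.tau1 e
    | .loose => Υ.tau1 e
  tau2 := fun e =>
    match Υ.shape e with
    | .link _ w => ζ w * Υ.tau2 e
    | _ => Υ.tau2 e
  gain := Υ.gain

/-- Gain switching by `θ : V → G`:
`φ^θ(e_{vw}) = τ(v,e)θ(v) + φ(e) + τ(w,e)θ(w)`. -/
def gainSwitch (θ : V → G) : GSGraph V E G where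
  shape := Υ.shape
  sign := Υ.sign
  tau1 := Υ.tau1
  tau2 := Υ.tau2
  gain := fun e =>
    match Υ.shape e with
    | .link v w => (Υ.tau1 e : ℤ) • θ v + Υ.gain e + (Υ.tau2 e : ℤ) • θ w
    | .half v => (Υ.tau1 e : ℤ) • θ v + Υ.gain e
    | .loose => Υ.gain e

/-- Reorientation by `ρ : E → {±1}`: negates the end signs and the gain of each
edge with `ρ e = -1`. -/
def reorient (ρ : E → ℤˣ) : GSGraph V E G where
  shape := Υ.shape
  sign := Υ.sign
  tau1 := fun e => ρ e * Υ.tau1 e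
  tau2 := fun e => ρ e * Υ.tau2 e
  gain := fun e => (ρ e : ℤ) • Υ.gain e

end GSGraph

/-! ### Auxiliary lemmas for Statement 13 -/

namespace GSGraph

variable {V E G : Type*} [AddCommGroup G] (Υ : GSGraph V E G)

section Conn

lemma joined_symm {S : Set E} {a b : V} (h : Υ.joined S a b) : Υ.joined S b a := by
  obtain ⟨e, he, h | h⟩ := h
  exacts [⟨e, he, Or.inr h⟩, ⟨e, he, Or.inl h⟩]

lemma conn_refl (S : Set E) (v : V) : Υ.conn S v v := Relation.ReflTransGen.refl

lemma conn_trans {S : Set E} {x y z : V} (h : Υ.conn S x y) (h' : Υ.conn S y z) :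
    Υ.conn S x z := h.trans h'

lemma conn_symm {S : Set E} {x y : V} (h : Υ.conn S x y) : Υ.conn S y x := by
  induction h with
  | refl => exact .refl
  | tail _ h ih => exact (Relation.ReflTransGen.single (Υ.joined_symm h)).trans ih

lemma conn_of_joined {S : Set E} {x y : V} (h : Υ.joined S x y) : Υ.conn S x y :=
  Relation.ReflTransGen.single h

lemma conn_of_conn_joined {S T : Set E} {x y : V}
    (hj : ∀ a b, Υ.joined S a b → Υ.conn T a b) (h : Υ.conn S x y) : Υ.conn T x y := by
  induction h with
  | refl => exact .refl
  | tail _ h ih => exact ih.trans (hj _ _ h)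

lemma conn_mono {S T : Set E} (hST : S ⊆ T) {x y : V} (h : Υ.conn S x y) :
    Υ.conn T x y := by
  refine Υ.conn_of_conn_joined (fun a b ⟨e, he, hsh⟩ => Υ.conn_of_joined ⟨e, hST he, hsh⟩) h

lemma mem_comp_self (S : Set E) (v : V) : v ∈ Υ.comp S v := Υ.conn_refl S v

lemma comp_eq_of_conn {S : Set E} {v w : V} (h : Υ.conn S v w) :
    Υ.comp S v = Υ.comp S w := by
  ext x
  exact ⟨fun hx => (Υ.conn_symm h).trans hx, fun hx => h.trans hx⟩

lemma conn_of_mem_comp {S : Set E} {v w : V} (h : w ∈ Υ.comp S v) : Υ.conn S v w := h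

lemma joined_insert_nonlink {S : Set E} {e : E} (he : ∀ v w, Υ.shape e ≠ .link v w)
    {a b : V} : Υ.joined (insert e S) a b ↔ Υ.joined S a b := by
  constructor
  · rintro ⟨f, hf, hsh⟩
    rcases hf with rfl | hf
    · rcases hsh with h | h
      · exact absurd h (he _ _)
      · exact absurd h (he _ _)
    · exact ⟨f, hf, hsh⟩
  · rintro ⟨f, hf, hsh⟩
    exact ⟨f, Or.inr hf, hsh⟩

lemma conn_insert_nonlink {S : Set E} {e : E} (he : ∀ v w, Υ.shape e ≠ .link v w)
    {x y : V} : Υ.conn (insert e S) x y ↔ Υ.conn S x y := by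
  constructor
  · exact Υ.conn_of_conn_joined fun a b h =>
      Υ.conn_of_joined ((Υ.joined_insert_nonlink he).1 h)
  · exact Υ.conn_mono (Set.subset_insert _ _)

lemma conn_insert_link {S : Set E} {e : E} {a b : V} (he : Υ.shape e = .link a b)
    {x y : V} : Υ.conn (insert e S) x y ↔
      Υ.conn S x y ∨ (Υ.conn S x a ∧ Υ.conn S b y) ∨ (Υ.conn S x b ∧ Υ.conn S a y) := by
  constructor
  · intro h
    induction h with
    | refl => exact Or.inl .refl
    | tail _ hj ih =>
      rename_i c y _
      obtain ⟨f, hf, hsh⟩ := hj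
      rcases hf with rfl | hf
      · have hcy : (c = a ∧ y = b) ∨ (c = b ∧ y = a) := by
          rcases hsh with h' | h' <;> rw [he] at h' <;> injection h' with h1 h2
          · exact Or.inl ⟨h1.symm, h2.symm⟩
          · exact Or.inr ⟨h2.symm, h1.symm⟩
        rcases hcy with ⟨rfl, rfl⟩ | ⟨rfl, rfl⟩
        · rcases ih with h' | ⟨h1, h2⟩ | ⟨h1, h2⟩
          · exact Or.inr (Or.inl ⟨h', Υ.conn_refl _ _⟩)
          · exact Or.inr (Or.inl ⟨h1, Υ.conn_refl _ _⟩)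
          · exact Or.inl h1
        · rcases ih with h' | ⟨h1, h2⟩ | ⟨h1, h2⟩
          · exact Or.inr (Or.inr ⟨h', Υ.conn_refl _ _⟩)
          · exact Or.inl h1
          · exact Or.inr (Or.inr ⟨h1, Υ.conn_refl _ _⟩)
      · have hj' : Υ.joined S c y := ⟨f, hf, hsh⟩
        rcases ih with h' | ⟨h1, h2⟩ | ⟨h1, h2⟩
        · exact Or.inl (h'.trans (Υ.conn_of_joined hj'))
        · exact Or.inr (Or.inl ⟨h1, h2.trans (Υ.conn_of_joined hj')⟩)
        · exact Or.inr (Or.inr ⟨h1, h2.trans (Υ.conn_of_joined hj')⟩)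
  · have hab : Υ.conn (insert e S) a b :=
      Υ.conn_of_joined ⟨e, Set.mem_insert _ _, Or.inl he⟩
    have hmono := fun {x y : V} => Υ.conn_mono (Set.subset_insert e S) (x := x) (y := y)
    rintro (h | ⟨h1, h2⟩ | ⟨h1, h2⟩)
    · exact hmono h
    · exact ((hmono h1).trans hab).trans (hmono h2)
    · exact ((hmono h1).trans (Υ.conn_symm hab)).trans (hmono h2)

end Conn

section Walks

/-- A flipped step. -/
def flipStep (d : DStep E) : DStep E := ⟨d.edge, !d.fwd⟩

lemma flipStep_edge (d : DStep E) : (flipStep d).edge = d.edge := rfl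

lemma srcO_flipStep (d : DStep E) : Υ.srcO (flipStep d) = Υ.tgtO d := by
  unfold srcO tgtO flipStep
  cases h : Υ.shape d.edge <;> simp only [] <;> cases d.fwd <;> simp

lemma tgtO_flipStep (d : DStep E) : Υ.tgtO (flipStep d) = Υ.srcO d := by
  unfold srcO tgtO flipStep
  cases h : Υ.shape d.edge <;> simp only [] <;> cases d.fwd <;> simp

lemma headSrc_cons (d : DStep E) (L : List (DStep E)) :
    Υ.headSrc (d :: L) = Υ.srcO d := by simp [headSrc]

lemma lastTgt_cons {L : List (DStep E)} (d : DStep E) (h : L ≠ []) :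
    Υ.lastTgt (d :: L) = Υ.lastTgt L := by
  obtain ⟨b, L', rfl⟩ := List.exists_cons_of_ne_nil h
  unfold lastTgt
  rw [List.getLast?_cons_cons]

lemma lastTgt_single (d : DStep E) : Υ.lastTgt [d] = Υ.tgtO d := by simp [lastTgt]

lemma headSrc_append {A : List (DStep E)} (B : List (DStep E)) (h : A ≠ []) :
    Υ.headSrc (A ++ B) = Υ.headSrc A := by
  unfold headSrc
  rw [List.head?_append]
  obtain ⟨b, L', rfl⟩ := List.exists_cons_of_ne_nil h
  simp

lemma lastTgt_append (A : List (DStep E)) {B : List (DStep E)} (h : B ≠ []) :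
    Υ.lastTgt (A ++ B) = Υ.lastTgt B := by
  unfold lastTgt
  rw [List.getLast?_append]
  cases hB : B.getLast? with
  | none => exact absurd (List.getLast?_eq_none_iff.1 hB) h
  | some b => simp

lemma srcO_of_link {d : DStep E} {p q : V} (h : Υ.shape d.edge = .link p q) :
    Υ.srcO d = some (if d.fwd then p else q) := by
  unfold srcO; rw [h]

lemma tgtO_of_link {d : DStep E} {p q : V} (h : Υ.shape d.edge = .link p q) :
    Υ.tgtO d = some (if d.fwd then q else p) := by
  unfold tgtO; rw [h]

/-- A (possibly empty) walk from `u` to `v` with edges in `T`. -/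
def GW (T : Set E) (L : List (DStep E)) (u v : V) : Prop :=
  Υ.IsSteps L ∧ Υ.FromTo L u v ∧ ∀ d ∈ L, d.edge ∈ T

lemma gw_nil {T : Set E} {u v : V} (h : u = v) : Υ.GW T [] u v :=
  ⟨⟨by simp, List.isChain_nil⟩, ⟨fun _ => h, fun h' => absurd rfl h'⟩, by simp⟩

lemma gw_joined {T : Set E} {d : DStep E} (hd : d.edge ∈ T) {p q u t : V}
    (hpq : Υ.shape d.edge = .link p q)
    (hu : Υ.srcO d = some u) (ht : Υ.tgtO d = some t) : Υ.joined T u t := by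
  rw [Υ.srcO_of_link hpq] at hu
  rw [Υ.tgtO_of_link hpq] at ht
  cases hf : d.fwd <;> rw [hf] at hu ht <;> simp at hu ht <;> subst hu <;> subst ht
  · exact ⟨d.edge, hd, Or.inr hpq⟩
  · exact ⟨d.edge, hd, Or.inl hpq⟩

lemma gw_cons {T : Set E} {d : DStep E} {L : List (DStep E)} {u v : V}
    (h : Υ.GW T (d :: L) u v) :
    ∃ t, Υ.joined T u t ∧ Υ.GW T L t v ∧ Υ.tgtO d = some t := by
  obtain ⟨⟨hsh, hch⟩, hft, hmem⟩ := h
  obtain ⟨p, q, hpq⟩ := hsh d (by simp)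
  obtain ⟨hhead, hlast⟩ := hft.2 (by simp)
  rw [Υ.headSrc_cons] at hhead
  set t := if d.fwd then q else p with htdef
  have ht : Υ.tgtO d = some t := Υ.tgtO_of_link hpq
  have hj : Υ.joined T u t := Υ.gw_joined (hmem d (by simp)) hpq hhead ht
  refine ⟨t, hj, ⟨⟨fun x hx => hsh x (by simp [hx]), (List.isChain_cons.1 hch).2⟩, ?_, ?_⟩, ht⟩
  · constructor
    · rintro rfl
      rw [Υ.lastTgt_single] at hlast
      rw [ht] at hlast
      exact (Option.some_injective _ hlast)
    · intro hL
      constructor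
      · obtain ⟨b, L', rfl⟩ := List.exists_cons_of_ne_nil hL
        have := (List.isChain_cons.1 hch).1 b (by simp)
        rw [Υ.headSrc_cons, ← this, ht]
      · rw [← Υ.lastTgt_cons d hL]
        exact hlast
  · exact fun x hx => hmem x (by simp [hx])

lemma gw_conn {T : Set E} {L : List (DStep E)} {u v : V} (h : Υ.GW T L u v) :
    Υ.conn T u v := by
  induction L generalizing u with
  | nil => rw [h.2.1.1 rfl]; exact Υ.conn_refl T v
  | cons d L ih =>
    obtain ⟨t, hj, hgw, -⟩ := Υ.gw_cons h
    exact (Υ.conn_of_joined hj).trans (ih hgw)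

lemma gw_src_conn {T : Set E} {L : List (DStep E)} {u v : V} (h : Υ.GW T L u v)
    {d : DStep E} (hd : d ∈ L) {x : V} (hx : Υ.srcO d = some x) : Υ.conn T u x := by
  induction L generalizing u with
  | nil => simp at hd
  | cons d' L ih =>
    rcases List.mem_cons.1 hd with rfl | hd'
    · have hhead := (h.2.1.2 (by simp)).1
      rw [Υ.headSrc_cons, hx] at hhead
      rw [Option.some_injective _ hhead]
      exact Υ.conn_refl T u
    · obtain ⟨t, hj, hgw, -⟩ := Υ.gw_cons h
      exact (Υ.conn_of_joined hj).trans (ih hgw hd')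

lemma gw_append {T : Set E} {L₁ L₂ : List (DStep E)} {u v w : V}
    (h1 : Υ.GW T L₁ u v) (h2 : Υ.GW T L₂ v w) : Υ.GW T (L₁ ++ L₂) u w := by
  rcases eq_or_ne L₁ [] with rfl | hn1
  · rw [h1.2.1.1 rfl]; simpa using h2
  rcases eq_or_ne L₂ [] with rfl | hn2
  · rw [← h2.2.1.1 rfl, List.append_nil]; exact h1
  obtain ⟨⟨hsh1, hch1⟩, hft1, hmem1⟩ := h1
  obtain ⟨⟨hsh2, hch2⟩, hft2, hmem2⟩ := h2
  obtain ⟨hh1, hl1⟩ := hft1.2 hn1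
  obtain ⟨hh2, hl2⟩ := hft2.2 hn2
  refine ⟨⟨?_, ?_⟩, ⟨fun h => absurd h (by simp [hn1]), fun _ => ⟨?_, ?_⟩⟩, ?_⟩
  · intro d hd; rcases List.mem_append.1 hd with hd | hd
    exacts [hsh1 d hd, hsh2 d hd]
  · refine List.isChain_append.2 ⟨hch1, hch2, fun x hx y hy => ?_⟩
    have hxl : Υ.lastTgt L₁ = Υ.tgtO x := by unfold lastTgt; rw [hx]; rfl
    have hyh : Υ.headSrc L₂ = Υ.srcO y := by unfold headSrc; rw [hy]; rfl
    rw [← hxl, ← hyh, hl1, hh2]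
  · rw [Υ.headSrc_append _ hn1]; exact hh1
  · rw [Υ.lastTgt_append _ hn2]; exact hl2
  · intro d hd; rcases List.mem_append.1 hd with hd | hd
    exacts [hmem1 d hd, hmem2 d hd]

lemma mem_revWalk {L : List (DStep E)} {d : DStep E} :
    d ∈ revWalk L ↔ ∃ d' ∈ L, d = flipStep d' := by
  unfold revWalk
  simp only [List.mem_reverse, List.mem_map, flipStep]
  constructor
  · rintro ⟨a, ha, rfl⟩; exact ⟨a, ha, rfl⟩
  · rintro ⟨a, ha, rfl⟩; exact ⟨a, ha, rfl⟩

lemma gw_rev {T : Set E} {L : List (DStep E)} {u v : V} (h : Υ.GW T L u v) :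
    Υ.GW T (revWalk L) v u := by
  obtain ⟨⟨hsh, hch⟩, hft, hmem⟩ := h
  rcases eq_or_ne L [] with rfl | hn
  · exact Υ.gw_nil (hft.1 rfl).symm
  obtain ⟨hh, hl⟩ := hft.2 hn
  have hrn : revWalk L ≠ [] := by
    simp [revWalk]; exact hn
  refine ⟨⟨?_, ?_⟩, ⟨fun h => absurd h hrn, fun _ => ⟨?_, ?_⟩⟩, ?_⟩
  · intro d hd
    obtain ⟨d', hd', rfl⟩ := mem_revWalk.1 hd
    exact hsh d' hd'
  · unfold revWalk
    show List.IsChain _ _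
    rw [List.isChain_reverse, List.isChain_map]
    refine hch.imp fun a b hab => ?_
    show Υ.tgtO (flipStep b) = Υ.srcO (flipStep a)
    rw [Υ.tgtO_flipStep, Υ.srcO_flipStep, hab]
  · unfold revWalk headSrc
    rw [List.head?_reverse, List.getLast?_map]
    obtain ⟨dl, hdl⟩ : ∃ dl, L.getLast? = some dl :=
      ⟨L.getLast hn, List.getLast?_eq_getLast hn⟩
    rw [hdl]
    show Υ.srcO (flipStep dl) = some v
    rw [Υ.srcO_flipStep]
    unfold lastTgt at hl
    rw [hdl] at hl
    exact hl
  · unfold revWalk lastTgt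
    rw [List.getLast?_reverse, List.head?_map]
    obtain ⟨dh, L', rfl⟩ := List.exists_cons_of_ne_nil hn
    simp only [List.head?_cons, Option.map_some]
    show Υ.tgtO (flipStep dh) = some u
    rw [Υ.tgtO_flipStep]
    rw [Υ.headSrc_cons] at hh
    exact hh
  · intro d hd
    obtain ⟨d', hd', rfl⟩ := mem_revWalk.1 hd
    exact hmem d' hd'

lemma walkSign_append (A B : List (DStep E)) :
    Υ.walkSign (A ++ B) = Υ.walkSign A * Υ.walkSign B := by
  simp [walkSign]

lemma walkSign_cons (d : DStep E) (L : List (DStep E)) :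
    Υ.walkSign (d :: L) = Υ.sign d.edge * Υ.walkSign L := by
  simp [walkSign]

lemma walkSign_revWalk (L : List (DStep E)) :
    Υ.walkSign (revWalk L) = Υ.walkSign L := by
  unfold walkSign revWalk
  rw [List.map_reverse, List.prod_reverse, List.map_map]
  rfl

/-- Splitting a closed walk at a chosen step. -/
lemma closed_split {T : Set E} {A B : List (DStep E)} {d : DStep E}
    (hsteps : Υ.IsSteps (A ++ d :: B))
    (hclosed : Υ.lastTgt (A ++ d :: B) = Υ.headSrc (A ++ d :: B))
    (hmemA : ∀ x ∈ A, x.edge ∈ T) (hmemB : ∀ x ∈ B, x.edge ∈ T)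
    {p q : V} (hp : Υ.srcO d = some p) (hq : Υ.tgtO d = some q) :
    Υ.GW T (B ++ A) q p := by
  obtain ⟨hsh, hch⟩ := hsteps
  obtain ⟨hchA, hchdB, hjA⟩ := List.isChain_append.1 hch
  obtain ⟨hjB, hchB⟩ := List.isChain_cons.1 hchdB
  have hshA : ∀ x ∈ A, ∃ v w, Υ.shape x.edge = .link v w := fun x hx => hsh x (by simp [hx])
  have hshB : ∀ x ∈ B, ∃ v w, Υ.shape x.edge = .link v w := fun x hx => hsh x (by simp [hx])
  -- last target of A is p (when A nonempty)
  have hlastA : A ≠ [] → Υ.lastTgt A = some p := by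
    intro hA
    obtain ⟨la, hla⟩ : ∃ la, A.getLast? = some la :=
      ⟨A.getLast hA, List.getLast?_eq_getLast hA⟩
    have := hjA la hla d (by simp)
    unfold lastTgt
    rw [hla, Option.bind_some, this]
    exact hp
  -- head source of B is q (when B nonempty)
  have hheadB : B ≠ [] → Υ.headSrc B = some q := by
    intro hB
    obtain ⟨hb, B', rfl⟩ := List.exists_cons_of_ne_nil hB
    have := hjB hb (by simp)
    rw [Υ.headSrc_cons, ← this]
    exact hq
  rcases eq_or_ne A [] with rfl | hA <;> rcases eq_or_ne B [] with rfl | hB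
  · -- both empty: W = [d]
    simp only [List.nil_append] at hclosed
    rw [Υ.lastTgt_single, Υ.headSrc_cons, hp, hq] at hclosed
    exact Υ.gw_nil (Option.some_injective _ hclosed)
  · -- A empty, B nonempty : GW B q p
    simp only [List.nil_append] at hclosed
    rw [Υ.headSrc_cons, Υ.lastTgt_cons d hB, hp] at hclosed
    simp only [List.append_nil]
    exact ⟨⟨hshB, hchB⟩, ⟨fun h => absurd h hB, fun _ => ⟨hheadB hB, hclosed⟩⟩, hmemB⟩
  · -- B empty, A nonempty : GW A q p
    simp only [List.append_nil, List.nil_append] at *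
    rw [Υ.lastTgt_append A (by simp : [d] ≠ []), Υ.lastTgt_single,
      Υ.headSrc_append _ hA, hq] at hclosed
    exact ⟨⟨hshA, hchA⟩, ⟨fun h => absurd h hA, fun _ => ⟨hclosed.symm, hlastA hA⟩⟩, hmemA⟩
  · -- both nonempty
    rw [Υ.lastTgt_append A (by simp), Υ.lastTgt_cons d hB, Υ.headSrc_append _ hA] at hclosed
    obtain ⟨z, hz⟩ : ∃ z, Υ.headSrc A = some z := by
      obtain ⟨ha, A', rfl⟩ := List.exists_cons_of_ne_nil hA
      obtain ⟨pa, qa, hpa⟩ := hshA ha (by simp)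
      rw [Υ.headSrc_cons, Υ.srcO_of_link hpa]
      exact ⟨_, rfl⟩
    have hgwB : Υ.GW T B q z :=
      ⟨⟨hshB, hchB⟩, ⟨fun h => absurd h hB, fun _ => ⟨hheadB hB, by rw [hclosed, hz]⟩⟩, hmemB⟩
    have hgwA : Υ.GW T A z p :=
      ⟨⟨hshA, hchA⟩, ⟨fun h => absurd h hA, fun _ => ⟨hz, hlastA hA⟩⟩, hmemA⟩
    exact Υ.gw_append hgwB hgwA

lemma gw_of_circle {T : Set E} {W : List (DStep E)} (hc : Υ.IsCircleWalk W)
    (hmem : ∀ d ∈ W, d.edge ∈ T) : ∃ u, Υ.headSrc W = some u ∧ Υ.GW T W u u := by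
  obtain ⟨hne, hsteps, hclosed, -, -⟩ := hc
  obtain ⟨d, W', rfl⟩ := List.exists_cons_of_ne_nil hne
  obtain ⟨p, q, hpq⟩ := hsteps.1 d (by simp)
  refine ⟨if d.fwd then p else q, by rw [Υ.headSrc_cons, Υ.srcO_of_link hpq], ?_⟩
  refine ⟨hsteps, ⟨fun h => absurd h hne, fun _ => ⟨?_, ?_⟩⟩, hmem⟩
  · rw [Υ.headSrc_cons, Υ.srcO_of_link hpq]
  · rw [hclosed, Υ.headSrc_cons, Υ.srcO_of_link hpq]

end Walks

section Extract

lemma exists_split_of_not_nodup_map {α β : Type*} (f : α → β) :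
    ∀ l : List α, ¬ (l.map f).Nodup →
      ∃ (A B C : List α) (b c : α), l = A ++ b :: B ++ c :: C ∧ f b = f c := by
  intro l
  induction l with
  | nil => simp
  | cons d l ih =>
    intro h
    by_cases hd : f d ∈ l.map f
    · obtain ⟨c, hc, hfc⟩ := List.mem_map.1 hd
      obtain ⟨B, C, rfl⟩ := List.append_of_mem hc
      exact ⟨[], B, C, d, c, by simp, hfc.symm⟩
    · have h2 : ¬ (l.map f).Nodup := by
        intro h2
        exact h (by rw [List.map_cons, List.nodup_cons]; exact ⟨hd, h2⟩)
      obtain ⟨A, B, C, b, c, rfl, hbc⟩ := ih h2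
      exact ⟨d :: A, B, C, b, c, by simp, hbc⟩

lemma getLast?_cons_ne {α : Type*} (d : α) {L : List α} (h : L ≠ []) :
    (d :: L).getLast? = L.getLast? := by
  obtain ⟨b, L', rfl⟩ := List.exists_cons_of_ne_nil h
  rw [List.getLast?_cons_cons]

lemma neg_closed_extract :
    ∀ (n : ℕ) (W : List (DStep E)), W.length ≤ n → Υ.IsSteps W →
      Υ.lastTgt W = Υ.headSrc W → Υ.walkSign W = -1 →
      ∃ W', Υ.IsCircleWalk W' ∧ Υ.walkSign W' = -1 ∧ ∀ d ∈ W', d ∈ W := by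
  intro n
  induction n with
  | zero =>
    intro W hlen _ _ hsign
    rw [List.length_eq_zero_iff.1 (Nat.le_zero.1 hlen)] at hsign
    simp only [walkSign, List.map_nil, List.prod_nil] at hsign
    exact absurd hsign (by decide)
  | succ n ih =>
    intro W hlen hsteps hclosed hsign
    by_cases hs : (W.map Υ.srcO).Nodup
    · by_cases hed : (W.map DStep.edge).Nodup
      · -- it is already a circle
        have hne : W ≠ [] := by
          rintro rfl
          simp only [walkSign, List.map_nil, List.prod_nil] at hsign
          exact absurd hsign (by decide)
        exact ⟨W, ⟨hne, hsteps, hclosed, hed, hs⟩, hsign, fun d hd => hd⟩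
      · -- a repeated edge, necessarily traversed in both directions
        obtain ⟨A, B, C, b, c, rfl, hbc⟩ := exists_split_of_not_nodup_map _ W hed
        obtain ⟨hsh, hch⟩ := hsteps
        obtain ⟨hchL, hchcC, hjLc⟩ := List.isChain_append.1 hch
        obtain ⟨hchA, hchbB, hjA⟩ := List.isChain_append.1 hchL
        obtain ⟨hjB, hchB⟩ := List.isChain_cons.1 hchbB
        obtain ⟨hjC, hchC⟩ := List.isChain_cons.1 hchcC
        have hjBc : ∀ lb ∈ B.getLast?, Υ.tgtO lb = Υ.srcO c := by
          intro lb hlb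
          refine hjLc lb ?_ c (by simp)
          have hB : B ≠ [] := by rintro rfl; simp at hlb
          rw [List.getLast?_append, getLast?_cons_ne b hB, hlb]
          rfl
        have hjbc0 : B = [] → Υ.tgtO b = Υ.srcO c := by
          rintro rfl
          refine hjLc b ?_ c (by simp)
          rw [show A ++ [b] = A ++ [b] from rfl, List.getLast?_concat]
          rfl
        have hfwd : b.fwd ≠ c.fwd := by
          intro hf
          have hsrc : Υ.srcO b = Υ.srcO c := by
            obtain ⟨p, q, hpq⟩ := hsh b (by simp)
            rw [Υ.srcO_of_link hpq, Υ.srcO_of_link (hbc ▸ hpq), hf]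
          rw [List.map_append, List.nodup_append] at hs
          exact hs.2.2 _ (List.mem_map_of_mem (f := Υ.srcO) (show b ∈ A ++ b :: B by simp))
            _ (List.mem_map_of_mem (f := Υ.srcO) (show c ∈ c :: C by simp)) hsrc
        have hcb : c = flipStep b := by
          obtain ⟨be, bf⟩ := b
          obtain ⟨ce, cf⟩ := c
          simp only [flipStep]
          simp only at hbc hfwd
          cases bf <;> cases cf <;> simp_all
        have hsbc : Υ.sign b.edge * Υ.sign c.edge = 1 := by
          rw [hbc]; exact Int.units_mul_self _
        have hscb : Υ.srcO c = Υ.tgtO b := by rw [hcb, srcO_flipStep]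
        have htcb : Υ.tgtO c = Υ.srcO b := by rw [hcb, tgtO_flipStep]
        have hsig2 : Υ.walkSign B * Υ.walkSign (A ++ C) = -1 := by
          have h0 : Υ.walkSign ((A ++ b :: B) ++ c :: C) =
              (Υ.sign b.edge * Υ.sign c.edge) *
                (Υ.walkSign B * (Υ.walkSign A * Υ.walkSign C)) := by
            simp only [walkSign_append, walkSign_cons]
            ac_rfl
          rw [h0, hsbc, one_mul] at hsign
          rw [walkSign_append]
          exact hsign
        rcases Int.units_eq_one_or (Υ.walkSign B) with h1 | h1
        · -- recurse into A ++ C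
          have hsAC : Υ.walkSign (A ++ C) = -1 := by
            rw [h1, one_mul] at hsig2; exact hsig2
          have hstepsAC : Υ.IsSteps (A ++ C) := by
            refine ⟨fun d hd => hsh d (by
              rcases List.mem_append.1 hd with h | h <;> simp [h]), ?_⟩
            refine List.isChain_append.2 ⟨hchA, hchC, fun x hx y hy => ?_⟩
            rw [hjA x hx b (by simp), ← htcb, hjC y hy]
          have hclosedAC : Υ.lastTgt (A ++ C) = Υ.headSrc (A ++ C) := by
            rcases eq_or_ne A [] with rfl | hA <;> rcases eq_or_ne C [] with rfl | hC
            · simp only [List.nil_append, walkSign, List.map_nil, List.prod_nil] at hsAC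
              exact absurd hsAC (by decide)
            · -- A = [], C ≠ []
              simp only [List.nil_append] at *
              have hhead : Υ.headSrc C = Υ.tgtO c := by
                obtain ⟨ch, C', rfl⟩ := List.exists_cons_of_ne_nil hC
                rw [Υ.headSrc_cons, ← hjC ch (by simp)]
              have hlast : Υ.lastTgt ((b :: B) ++ c :: C) = Υ.lastTgt C := by
                rw [Υ.lastTgt_append _ (by simp : c :: C ≠ []), Υ.lastTgt_cons _ hC]
              rw [hlast, Υ.headSrc_append _ (by simp : b :: B ≠ []), Υ.headSrc_cons]
                at hclosed
              rw [hhead, htcb, ← hclosed]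
            · -- A ≠ [], C = []
              simp only [List.append_nil] at *
              have hlastW : Υ.lastTgt ((A ++ b :: B) ++ [c]) = Υ.tgtO c := by
                rw [Υ.lastTgt_append _ (by simp : [c] ≠ []), Υ.lastTgt_single]
              have hlastA : Υ.lastTgt A = Υ.srcO b := by
                obtain ⟨la, hla⟩ : ∃ la, A.getLast? = some la :=
                  ⟨A.getLast hA, List.getLast?_eq_getLast hA⟩
                unfold lastTgt
                rw [hla, Option.bind_some]
                exact hjA la hla b (by simp)
              rw [hlastW, Υ.headSrc_append _ (by simp [hA] : A ++ b :: B ≠ []),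
                Υ.headSrc_append _ hA] at hclosed
              rw [hlastA, ← htcb]
              exact hclosed
            · -- both nonempty
              have hlast : Υ.lastTgt (A ++ C) =
                  Υ.lastTgt ((A ++ b :: B) ++ c :: C) := by
                rw [Υ.lastTgt_append _ hC,
                  Υ.lastTgt_append _ (by simp : c :: C ≠ []), Υ.lastTgt_cons _ hC]
              have hhead : Υ.headSrc (A ++ C) =
                  Υ.headSrc ((A ++ b :: B) ++ c :: C) := by
                rw [Υ.headSrc_append _ hA,
                  Υ.headSrc_append _ (by simp [hA] : A ++ b :: B ≠ []),
                  Υ.headSrc_append _ hA]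
              rw [hlast, hhead, hclosed]
          obtain ⟨W', hW1, hW2, hW3⟩ := ih (A ++ C) (by
            have := hlen
            simp only [List.length_append, List.length_cons] at *
            omega) hstepsAC hclosedAC hsAC
          refine ⟨W', hW1, hW2, fun d hd => ?_⟩
          rcases List.mem_append.1 (hW3 d hd) with h | h <;> simp [h]
        · -- recurse into B
          have hBne : B ≠ [] := by
            rintro rfl
            simp only [walkSign, List.map_nil, List.prod_nil] at h1
            exact absurd h1 (by decide)
          have hstepsB : Υ.IsSteps B := ⟨fun d hd => hsh d (by simp [hd]), hchB⟩
          have hclosedB : Υ.lastTgt B = Υ.headSrc B := by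
            have hlastB : Υ.lastTgt B = Υ.srcO c := by
              obtain ⟨lb, hlb⟩ : ∃ lb, B.getLast? = some lb :=
                ⟨B.getLast hBne, List.getLast?_eq_getLast hBne⟩
              unfold lastTgt
              rw [hlb, Option.bind_some]
              exact hjBc lb hlb
            have hheadB : Υ.headSrc B = Υ.tgtO b := by
              obtain ⟨hb', B', rfl⟩ := List.exists_cons_of_ne_nil hBne
              rw [Υ.headSrc_cons, ← hjB hb' (by simp)]
            rw [hlastB, hheadB, hscb]
          obtain ⟨W', hW1, hW2, hW3⟩ := ih B (by
            have := hlen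
            simp only [List.length_append, List.length_cons] at *
            omega) hstepsB hclosedB h1
          exact ⟨W', hW1, hW2, fun d hd => by simp [hW3 d hd]⟩
    · -- a repeated vertex
      obtain ⟨A, B, C, b, c, rfl, hbc⟩ := exists_split_of_not_nodup_map _ W hs
      obtain ⟨hsh, hch⟩ := hsteps
      obtain ⟨hchL, hchcC, hjLc⟩ := List.isChain_append.1 hch
      obtain ⟨hchA, hchbB, hjA⟩ := List.isChain_append.1 hchL
      obtain ⟨hjB, hchB⟩ := List.isChain_cons.1 hchbB
      obtain ⟨hjC, hchC⟩ := List.isChain_cons.1 hchcC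
      have hjBc : ∀ lb ∈ B.getLast?, Υ.tgtO lb = Υ.srcO c := by
        intro lb hlb
        refine hjLc lb ?_ c (by simp)
        have hB : B ≠ [] := by rintro rfl; simp at hlb
        rw [List.getLast?_append, getLast?_cons_ne b hB, hlb]
        rfl
      have hjbc0 : B = [] → Υ.tgtO b = Υ.srcO c := by
        rintro rfl
        refine hjLc b ?_ c (by simp)
        rw [show A ++ [b] = A ++ [b] from rfl, List.getLast?_concat]
        rfl
      have hsplit : Υ.walkSign (b :: B) * Υ.walkSign (A ++ c :: C) = -1 := by
        rw [← hsign]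
        simp only [walkSign_append, walkSign_cons]
        ac_rfl
      -- closedness of b :: B
      have hclosed1 : Υ.lastTgt (b :: B) = Υ.headSrc (b :: B) := by
        rw [Υ.headSrc_cons]
        rcases eq_or_ne B [] with rfl | hB
        · rw [Υ.lastTgt_single, hjbc0 rfl, hbc]
        · rw [Υ.lastTgt_cons _ hB]
          obtain ⟨lb, hlb⟩ : ∃ lb, B.getLast? = some lb :=
            ⟨B.getLast hB, List.getLast?_eq_getLast hB⟩
          unfold lastTgt
          rw [hlb, Option.bind_some, hjBc lb hlb, hbc]
      have hsteps1 : Υ.IsSteps (b :: B) := by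
        refine ⟨fun d hd => hsh d ?_, List.isChain_cons.2 ⟨hjB, hchB⟩⟩
        rcases List.mem_cons.1 hd with rfl | h
        · simp
        · simp [h]
      -- closedness of A ++ c :: C
      have hclosed2 : Υ.lastTgt (A ++ c :: C) = Υ.headSrc (A ++ c :: C) := by
        have hlast : Υ.lastTgt (A ++ c :: C) =
            Υ.lastTgt ((A ++ b :: B) ++ c :: C) := by
          rw [Υ.lastTgt_append _ (by simp : c :: C ≠ []),
            Υ.lastTgt_append _ (by simp : c :: C ≠ [])]
        rw [hlast, hclosed]
        rcases eq_or_ne A [] with rfl | hA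
        · simp only [List.nil_append]
          rw [Υ.headSrc_append _ (by simp : b :: B ≠ []), Υ.headSrc_cons,
            Υ.headSrc_cons, hbc]
        · rw [Υ.headSrc_append _ hA,
            Υ.headSrc_append _ (by simp [hA] : A ++ b :: B ≠ []), Υ.headSrc_append _ hA]
      have hsteps2 : Υ.IsSteps (A ++ c :: C) := by
        refine ⟨fun d hd => hsh d (by
          rcases List.mem_append.1 hd with h | h
          · simp [h]
          · rcases List.mem_cons.1 h with rfl | h
            · simp
            · simp [h]), ?_⟩
        refine List.isChain_append.2 ⟨hchA, hchcC, fun x hx y hy => ?_⟩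
        simp only [List.head?_cons, Option.mem_def, Option.some.injEq] at hy
        subst hy
        rw [hjA x hx b (by simp), hbc]
      rcases Int.units_eq_one_or (Υ.walkSign (b :: B)) with h1 | h1
      · have hs2 : Υ.walkSign (A ++ c :: C) = -1 := by
          rw [h1, one_mul] at hsplit; exact hsplit
        obtain ⟨W', hW1, hW2, hW3⟩ := ih (A ++ c :: C) (by
          have := hlen
          simp only [List.length_append, List.length_cons] at *
          omega) hsteps2 hclosed2 hs2
        refine ⟨W', hW1, hW2, fun d hd => ?_⟩
        rcases List.mem_append.1 (hW3 d hd) with h | h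
        · simp [h]
        · rcases List.mem_cons.1 h with rfl | h
          · simp
          · simp [h]
      · obtain ⟨W', hW1, hW2, hW3⟩ := ih (b :: B) (by
          have := hlen
          simp only [List.length_append, List.length_cons] at *
          omega) hsteps1 hclosed1 h1
        refine ⟨W', hW1, hW2, fun d hd => ?_⟩
        rcases List.mem_cons.1 (hW3 d hd) with rfl | h
        · simp
        · simp [h]

end Extract

section Balance

/-- Balancedness depends only on the component. -/
lemma balancedAt_congr {T : Set E} {v w : V} (h : Υ.conn T v w) :
    Υ.BalancedAt T v ↔ Υ.BalancedAt T w := by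
  constructor <;> intro hb <;> refine ⟨fun f hf u hu hc => ?_, fun W hW hmem ⟨u, hu, hc⟩ => ?_⟩
  · exact hb.1 f hf u hu (h.trans hc)
  · exact hb.2 W hW hmem ⟨u, hu, h.trans hc⟩
  · exact hb.1 f hf u hu ((Υ.conn_symm h).trans hc)
  · exact hb.2 W hW hmem ⟨u, hu, (Υ.conn_symm h).trans hc⟩

/-- The set of balanced components. -/
def balComps (T : Set E) : Set (Set V) :=
  {X | ∃ v, X = Υ.comp T v ∧ Υ.BalancedAt T v}

lemma bBal_eq_ncard (T : Set E) : Υ.bBal T = (Υ.balComps T).ncard :=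
  Nat.card_coe_set_eq (Υ.balComps T)

/-- A circle walk through the link `e` connects its endpoints in `T'`. -/
lemma circle_conn_endpoint {T' : Set E} {N : List (DStep E)} {u₀ : V}
    (hc : Υ.IsCircleWalk N) (hmem : ∀ d ∈ N, d.edge ∈ T')
    (hu : Υ.headSrc N = some u₀) {d : DStep E} (hd : d ∈ N) {e : E} (hde : d.edge = e)
    {a b : V} (he : Υ.shape e = .link a b) :
    Υ.conn T' u₀ a ∨ Υ.conn T' u₀ b := by
  obtain ⟨u, hu', hgw⟩ := Υ.gw_of_circle hc hmem
  rw [hu] at hu'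
  obtain rfl := Option.some_injective _ hu'
  have hsrc : Υ.srcO d = some (if d.fwd then a else b) :=
    Υ.srcO_of_link (by rw [hde]; exact he)
  have := Υ.gw_src_conn hgw hd hsrc
  cases hf : d.fwd <;> rw [hf] at this <;> simp at this
  · exact Or.inr this
  · exact Or.inl this

/-- A circle walk through the link `e` whose other edges lie in `T`
connects the endpoints of `e` in `T`. -/
lemma circle_link_conn {T : Set E} {e : E} {N : List (DStep E)}
    (hc : Υ.IsCircleWalk N) (hmem : ∀ d ∈ N, d.edge ∈ insert e T)
    {d₀ : DStep E} (hd₀ : d₀ ∈ N) (hde : d₀.edge = e)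
    {a b : V} (he : Υ.shape e = .link a b) : Υ.conn T a b := by
  obtain ⟨P, Q, rfl⟩ := List.append_of_mem hd₀
  obtain ⟨hne, hsteps, hclosed, hnodup, -⟩ := hc
  rw [List.map_append, List.map_cons, List.nodup_middle, List.nodup_cons] at hnodup
  have hP : ∀ x ∈ P, x.edge ∈ T := by
    intro x hx
    rcases hmem x (by simp [hx]) with h | h
    · exfalso
      apply hnodup.1
      rw [hde, ← h]
      exact List.mem_append_left _ (List.mem_map_of_mem hx)
    · exact h
  have hQ : ∀ x ∈ Q, x.edge ∈ T := by
    intro x hx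
    rcases hmem x (by simp [hx]) with h | h
    · exfalso
      apply hnodup.1
      rw [hde, ← h]
      exact List.mem_append_right _ (List.mem_map_of_mem hx)
    · exact h
  have hsh : Υ.shape d₀.edge = .link a b := by rw [hde]; exact he
  have hgw : Υ.GW T (Q ++ P) (if d₀.fwd then b else a) (if d₀.fwd then a else b) :=
    Υ.closed_split hsteps hclosed hP hQ (Υ.srcO_of_link hsh) (Υ.tgtO_of_link hsh)
  have hconn := Υ.gw_conn hgw
  cases hf : d₀.fwd <;> rw [hf] at hconn <;> simp at hconn
  · exact hconn
  · exact Υ.conn_symm hconn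

lemma bal_insert_nonlink {T : Set E} {e : E} (he : ∀ p q, Υ.shape e ≠ .link p q)
    {v : V} (hhalf : ∀ u, Υ.shape e = .half u → ¬ Υ.conn T v u)
    (h : Υ.BalancedAt T v) : Υ.BalancedAt (insert e T) v := by
  have hconn : ∀ x y : V, Υ.conn (insert e T) x y ↔ Υ.conn T x y := fun x y =>
    Υ.conn_insert_nonlink he
  constructor
  · intro f hf u hu hc
    rcases Set.mem_insert_iff.1 hf with rfl | hf
    · exact hhalf u hu ((hconn _ _).1 hc)
    · exact h.1 f hf u hu ((hconn _ _).1 hc)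
  · intro W hW hmem hu
    obtain ⟨u, hu1, hu2⟩ := hu
    refine h.2 W hW (fun d hd => ?_) ⟨u, hu1, (hconn _ _).1 hu2⟩
    rcases Set.mem_insert_iff.1 (hmem d hd) with hde | hde
    · obtain ⟨p, q, hpq⟩ := hW.2.1.1 d hd
      rw [hde] at hpq
      exact absurd hpq (he p q)
    · exact hde

lemma comp_insert_nonlink {T : Set E} {e : E} (he : ∀ p q, Υ.shape e ≠ .link p q)
    (v : V) : Υ.comp (insert e T) v = Υ.comp T v :=
  Set.ext fun _ => Υ.conn_insert_nonlink he

lemma bal_insert_link {T : Set E} {e : E} {a b v : V} (he : Υ.shape e = .link a b)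
    (hva : ¬ Υ.conn T v a) (hvb : ¬ Υ.conn T v b) (h : Υ.BalancedAt T v) :
    Υ.BalancedAt (insert e T) v := by
  have htr : ∀ u, Υ.conn (insert e T) v u → Υ.conn T v u := by
    intro u hc
    rcases (Υ.conn_insert_link he).1 hc with h' | ⟨h1, h2⟩ | ⟨h1, h2⟩
    · exact h'
    · exact absurd h1 hva
    · exact absurd h1 hvb
  constructor
  · intro f hf u hu hc
    rcases Set.mem_insert_iff.1 hf with rfl | hf
    · rw [he] at hu; cases hu
    · exact h.1 f hf u hu (htr u hc)
  · intro W hW hmem hex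
    obtain ⟨u, hu1, hu2⟩ := hex
    by_cases heW : ∃ d ∈ W, d.edge = e
    · obtain ⟨d, hd, hde⟩ := heW
      exfalso
      rcases Υ.circle_conn_endpoint hW hmem hu1 hd hde he with hca | hcb
      · exact hva (htr a (hu2.trans hca))
      · exact hvb (htr b (hu2.trans hcb))
    · push_neg at heW
      exact h.2 W hW (fun d hd =>
        (Set.mem_insert_iff.1 (hmem d hd)).resolve_left (heW d hd)) ⟨u, hu1, htr u hu2⟩

lemma comp_insert_link {T : Set E} {e : E} {a b v : V} (he : Υ.shape e = .link a b)
    (hva : ¬ Υ.conn T v a) (hvb : ¬ Υ.conn T v b) :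
    Υ.comp (insert e T) v = Υ.comp T v := by
  ext w
  constructor
  · intro hc
    rcases (Υ.conn_insert_link he).1 hc with h' | ⟨h1, h2⟩ | ⟨h1, h2⟩
    · exact h'
    · exact absurd h1 hva
    · exact absurd h1 hvb
  · exact Υ.conn_mono (Set.subset_insert _ _)

lemma merged_balanced {T : Set E} {e : E} {a b : V} (he : Υ.shape e = .link a b)
    (hnc : ¬ Υ.conn T a b) (ha : Υ.BalancedAt T a) (hb : Υ.BalancedAt T b) :
    Υ.BalancedAt (insert e T) a := by
  have htr : ∀ u, Υ.conn (insert e T) a u → Υ.conn T a u ∨ Υ.conn T b u := by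
    intro u hc
    rcases (Υ.conn_insert_link he).1 hc with h' | ⟨h1, h2⟩ | ⟨h1, h2⟩
    · exact Or.inl h'
    · exact Or.inr h2
    · exact absurd h1 hnc
  constructor
  · intro f hf u hu hc
    rcases Set.mem_insert_iff.1 hf with rfl | hf
    · rw [he] at hu; cases hu
    · rcases htr u hc with h' | h'
      · exact ha.1 f hf u hu h'
      · exact hb.1 f hf u hu h'
  · intro W hW hmem hex
    obtain ⟨u, hu1, hu2⟩ := hex
    by_cases heW : ∃ d ∈ W, d.edge = e
    · obtain ⟨d, hd, hde⟩ := heW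
      exact absurd (Υ.circle_link_conn hW hmem hd hde he) hnc
    · push_neg at heW
      have hmem' : ∀ d ∈ W, d.edge ∈ T := fun d hd =>
        (Set.mem_insert_iff.1 (hmem d hd)).resolve_left (heW d hd)
      rcases htr u hu2 with h' | h'
      · exact ha.2 W hW hmem' ⟨u, hu1, h'⟩
      · exact hb.2 W hW hmem' ⟨u, hu1, h'⟩

lemma ncard_le_add_one {α : Type*} [Finite α] {A B : Set α} {x : α}
    (h : A ⊆ B ∪ {x}) : A.ncard ≤ B.ncard + 1 := by
  have h1 := Set.ncard_le_ncard h (Set.toFinite _)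
  have h2 := Set.ncard_union_le B {x}
  rw [Set.ncard_singleton] at h2
  omega

lemma bBal_le_insert [Finite V] (T : Set E) (e : E) :
    Υ.bBal T ≤ Υ.bBal (insert e T) + 1 := by
  rw [Υ.bBal_eq_ncard, Υ.bBal_eq_ncard]
  have hnotbal : ∀ w, ¬ Υ.BalancedAt T w → ∀ X ∈ Υ.balComps T, X ≠ Υ.comp T w := by
    rintro w hw X ⟨v, rfl, hbv⟩ hEq
    have hvw : Υ.conn T v w := by
      have : w ∈ Υ.comp T v := by rw [hEq]; exact Υ.mem_comp_self T w
      exact this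
    exact hw ((Υ.balancedAt_congr hvw).1 hbv)
  cases he : Υ.shape e with
  | half u =>
    have hnl : ∀ p q, Υ.shape e ≠ .link p q := by intro p q h'; rw [he] at h'; cases h'
    apply ncard_le_add_one (x := Υ.comp T u)
    rintro X ⟨v, rfl, hbv⟩
    by_cases hX : Υ.comp T v = Υ.comp T u
    · exact Or.inr hX
    · left
      have hvu : ¬ Υ.conn T v u := fun hc => hX (Υ.comp_eq_of_conn hc)
      refine ⟨v, (Υ.comp_insert_nonlink hnl v).symm,
        Υ.bal_insert_nonlink hnl (fun u' hu' => ?_) hbv⟩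
      rw [he] at hu'
      injection hu' with h''
      rw [← h'']
      exact hvu
  | loose =>
    have hnl : ∀ p q, Υ.shape e ≠ .link p q := by intro p q h'; rw [he] at h'; cases h'
    have hsub : Υ.balComps T ⊆ Υ.balComps (insert e T) := by
      rintro X ⟨v, rfl, hbv⟩
      refine ⟨v, (Υ.comp_insert_nonlink hnl v).symm,
        Υ.bal_insert_nonlink hnl (fun u' hu' => ?_) hbv⟩
      rw [he] at hu'
      cases hu'
    have := Set.ncard_le_ncard hsub (Set.toFinite _)
    omega
  | link a b =>
    have key : ∀ X ∈ Υ.balComps T, X ≠ Υ.comp T a → X ≠ Υ.comp T b →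
        X ∈ Υ.balComps (insert e T) \ {Υ.comp (insert e T) a} := by
      rintro X ⟨v, rfl, hbv⟩ hXa hXb
      have hva : ¬ Υ.conn T v a := fun hc => hXa (Υ.comp_eq_of_conn hc)
      have hvb : ¬ Υ.conn T v b := fun hc => hXb (Υ.comp_eq_of_conn hc)
      constructor
      · exact ⟨v, (Υ.comp_insert_link he hva hvb).symm, Υ.bal_insert_link he hva hvb hbv⟩
      · intro hmem
        rw [Set.mem_singleton_iff] at hmem
        apply hva
        have ha' : a ∈ Υ.comp T v := by
          rw [hmem]
          exact Υ.mem_comp_self _ a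
        rcases (Υ.conn_insert_link he).1 (Υ.conn_of_mem_comp
          ((Υ.comp_insert_link he hva hvb) ▸ ha' : a ∈ Υ.comp (insert e T) v)) with
          h' | ⟨h1, h2⟩ | ⟨h1, h2⟩
        · exact h'
        · exact h1
        · exact absurd h1 hvb
    by_cases hcase : ¬ Υ.conn T a b ∧ Υ.BalancedAt T a ∧ Υ.BalancedAt T b
    · obtain ⟨hnc, hba, hbb⟩ := hcase
      have hM : Υ.comp (insert e T) a ∈ Υ.balComps (insert e T) :=
        ⟨a, rfl, Υ.merged_balanced he hnc hba hbb⟩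
      have hsub : Υ.balComps T ⊆
          (Υ.balComps (insert e T) \ {Υ.comp (insert e T) a}) ∪
            {Υ.comp T a, Υ.comp T b} := by
        intro X hX
        by_cases h1 : X = Υ.comp T a
        · exact Or.inr (by simp [h1])
        by_cases h2 : X = Υ.comp T b
        · exact Or.inr (by simp [h2])
        exact Or.inl (key X hX h1 h2)
      have c1 := Set.ncard_le_ncard hsub (Set.toFinite _)
      have c2 := Set.ncard_union_le
        (Υ.balComps (insert e T) \ {Υ.comp (insert e T) a})
        ({Υ.comp T a, Υ.comp T b} : Set (Set V))
      have c3 : ({Υ.comp T a, Υ.comp T b} : Set (Set V)).ncard ≤ 2 := by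
        refine le_trans (Set.ncard_insert_le _ _) ?_
        rw [Set.ncard_singleton]
      have c4 := Set.ncard_diff_singleton_add_one hM (Set.toFinite _)
      omega
    · have hone : ∃ z : Set V, ∀ X ∈ Υ.balComps T,
          X = Υ.comp T a ∨ X = Υ.comp T b → X = z := by
        by_cases hc : Υ.conn T a b
        · refine ⟨Υ.comp T a, ?_⟩
          rintro X hX (rfl | rfl)
          · rfl
          · exact (Υ.comp_eq_of_conn hc).symm
        · rcases Classical.em (Υ.BalancedAt T a) with hba | hba
          · have hbb : ¬ Υ.BalancedAt T b := fun hbb => hcase ⟨hc, hba, hbb⟩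
            refine ⟨Υ.comp T a, ?_⟩
            rintro X hX (rfl | h2)
            · rfl
            · exact absurd h2 (hnotbal b hbb X hX)
          · refine ⟨Υ.comp T b, ?_⟩
            rintro X hX (h1 | rfl)
            · exact absurd h1 (hnotbal a hba X hX)
            · rfl
      obtain ⟨z, hz⟩ := hone
      have hsub : Υ.balComps T ⊆
          (Υ.balComps (insert e T) \ {Υ.comp (insert e T) a}) ∪ {z} := by
        intro X hX
        by_cases h1 : X = Υ.comp T a
        · exact Or.inr (by simp [hz X hX (Or.inl h1)])
        by_cases h2 : X = Υ.comp T b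
        · exact Or.inr (by simp [hz X hX (Or.inr h2)])
        exact Or.inl (key X hX h1 h2)
      have c1 := ncard_le_add_one hsub
      have c2 := Set.ncard_le_ncard
        (Set.diff_subset : Υ.balComps (insert e T) \ {Υ.comp (insert e T) a} ⊆ _)
        (Set.toFinite _)
      omega

lemma card_le_ncard_add_bBal [Fintype V] [Finite E] (T : Set E) :
    Fintype.card V ≤ T.ncard + Υ.bBal T := by
  refine Set.Finite.induction_on (motive := fun s _ => Fintype.card V ≤ s.ncard + Υ.bBal s) T (Set.toFinite T) ?_ ?_
  · -- base case : T = ∅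
    have hcomp : ∀ v : V, Υ.comp (∅ : Set E) v = {v} := by
      intro v
      ext w
      constructor
      · intro h
        induction h with
        | refl => rfl
        | tail _ hj ih => obtain ⟨f, hf, -⟩ := hj; cases hf
      · intro h
        rw [Set.mem_singleton_iff] at h
        rw [h]
        exact Υ.conn_refl _ _
    have hbal : ∀ v : V, Υ.BalancedAt (∅ : Set E) v := by
      intro v
      constructor
      · intro f hf; cases hf
      · intro W hW hmem _
        obtain ⟨d, W', rfl⟩ := List.exists_cons_of_ne_nil hW.1
        cases hmem d (by simp)
    have hset : Υ.balComps (∅ : Set E) = Set.range (fun v : V => ({v} : Set V)) := by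
      ext X
      constructor
      · rintro ⟨v, rfl, -⟩; exact ⟨v, (hcomp v).symm⟩
      · rintro ⟨v, rfl⟩; exact ⟨v, (hcomp v).symm, hbal v⟩
    rw [Υ.bBal_eq_ncard, hset, ← Set.image_univ,
      Set.ncard_image_of_injective _ Set.singleton_injective, Set.ncard_univ,
      Nat.card_eq_fintype_card]
    simp
  · intro e s hes hfin ih
    have h1 := Υ.bBal_le_insert s e
    have h2 : (insert e s).ncard = s.ncard + 1 := Set.ncard_insert_of_notMem hes hfin
    omega

end Balance

section Sacrifice

lemma same_edge_ends {d₀ d₁ : DStep E} (he : d₁.edge = d₀.edge) {p q : V}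
    (hpq : Υ.shape d₀.edge = .link p q) :
    (Υ.srcO d₁ = Υ.srcO d₀ ∧ Υ.tgtO d₁ = Υ.tgtO d₀) ∨
      (Υ.srcO d₁ = Υ.tgtO d₀ ∧ Υ.tgtO d₁ = Υ.srcO d₀) := by
  have hpq' : Υ.shape d₁.edge = .link p q := by rw [he]; exact hpq
  rw [Υ.srcO_of_link hpq, Υ.tgtO_of_link hpq, Υ.srcO_of_link hpq', Υ.tgtO_of_link hpq']
  cases d₀.fwd <;> cases d₁.fwd <;> simp

lemma conn_diff_nonlink {S : Set E} {f : E} (hf : ∀ p q, Υ.shape f ≠ .link p q) :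
    ∀ x y, Υ.conn (S \ {f}) x y ↔ Υ.conn S x y := by
  intro x y
  constructor
  · exact Υ.conn_mono Set.diff_subset
  · refine Υ.conn_of_conn_joined fun a b hj => ?_
    obtain ⟨g, hg, hsh⟩ := hj
    refine Υ.conn_of_joined ⟨g, ⟨hg, ?_⟩, hsh⟩
    simp only [Set.mem_singleton_iff]
    rintro rfl
    rcases hsh with h | h
    exacts [hf _ _ h, hf _ _ h]

lemma conn_diff_circle {S : Set E} {Z : List (DStep E)} (hc : Υ.IsCircleWalk Z)
    (hmem : ∀ d ∈ Z, d.edge ∈ S) {d₀ : DStep E} (hd₀ : d₀ ∈ Z) :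
    ∀ x y, Υ.conn (S \ {d₀.edge}) x y ↔ Υ.conn S x y := by
  intro x y
  constructor
  · exact Υ.conn_mono Set.diff_subset
  · refine Υ.conn_of_conn_joined fun a b hj => ?_
    obtain ⟨g, hg, hsh⟩ := hj
    by_cases hgf : g = d₀.edge
    · subst hgf
      obtain ⟨P, Q, rfl⟩ := List.append_of_mem hd₀
      obtain ⟨hne, hsteps, hclosed, hnodup, -⟩ := hc
      rw [List.map_append, List.map_cons, List.nodup_middle, List.nodup_cons] at hnodup
      have hP : ∀ xx ∈ P, xx.edge ∈ S \ {d₀.edge} := by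
        intro xx hxx
        refine ⟨hmem xx (by simp [hxx]), ?_⟩
        simp only [Set.mem_singleton_iff]
        intro hEq
        exact hnodup.1 (by rw [← hEq]
                           exact List.mem_append_left _ (List.mem_map_of_mem hxx))
      have hQ : ∀ xx ∈ Q, xx.edge ∈ S \ {d₀.edge} := by
        intro xx hxx
        refine ⟨hmem xx (by simp [hxx]), ?_⟩
        simp only [Set.mem_singleton_iff]
        intro hEq
        exact hnodup.1 (by rw [← hEq]
                           exact List.mem_append_right _ (List.mem_map_of_mem hxx))
      obtain ⟨p', q', hpq⟩ := hsteps.1 d₀ (by simp)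
      have hgw := Υ.closed_split hsteps hclosed hP hQ (Υ.srcO_of_link hpq)
        (Υ.tgtO_of_link hpq)
      have hconn := Υ.gw_conn hgw
      rcases hsh with h' | h' <;> rw [hpq] at h' <;> injection h' with h1 h2 <;>
        subst h1 <;> subst h2
      · cases hfw : d₀.fwd <;> rw [hfw] at hconn <;> simp at hconn
        · exact hconn
        · exact Υ.conn_symm hconn
      · cases hfw : d₀.fwd <;> rw [hfw] at hconn <;> simp at hconn
        · exact Υ.conn_symm hconn
        · exact hconn
    · exact Υ.conn_of_joined ⟨g, ⟨hg, by simp [hgf]⟩, hsh⟩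

/-- Two circles in `S` sharing the edge `f`, one positive and one negative,
combine into a negative circle avoiding `f`. -/
lemma neg_circle_of_two_circles {S : Set E} {f : E}
    {Z N : List (DStep E)} (hcZ : Υ.IsCircleWalk Z) (hcN : Υ.IsCircleWalk N)
    (hmemZ : ∀ d ∈ Z, d.edge ∈ S) (hmemN : ∀ d ∈ N, d.edge ∈ S)
    {d₀ : DStep E} (hd₀ : d₀ ∈ Z) (hd₀f : d₀.edge = f)
    {d₁ : DStep E} (hd₁ : d₁ ∈ N) (hd₁f : d₁.edge = f)
    (hsZ : Υ.walkSign Z = 1) (hsN : Υ.walkSign N = -1) :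
    ∃ W', Υ.IsCircleWalk W' ∧ Υ.walkSign W' = -1 ∧
      (∀ d ∈ W', d.edge ∈ S \ {f}) ∧
      ∃ u' w, Υ.headSrc W' = some u' ∧ Υ.tgtO d₁ = some w ∧
        Υ.conn (S \ {f}) w u' := by
  subst hd₀f
  obtain ⟨P₀, Q₀, rfl⟩ := List.append_of_mem hd₀
  obtain ⟨P₁, Q₁, rfl⟩ := List.append_of_mem hd₁
  obtain ⟨hneZ, hstepsZ, hclosedZ, hnodupZ, -⟩ := hcZ
  obtain ⟨hneN, hstepsN, hclosedN, hnodupN, -⟩ := hcN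
  rw [List.map_append, List.map_cons, List.nodup_middle, List.nodup_cons] at hnodupZ
  rw [List.map_append, List.map_cons, List.nodup_middle, List.nodup_cons] at hnodupN
  have hP₀ : ∀ xx ∈ P₀, xx.edge ∈ S \ {d₀.edge} := by
    intro xx hxx
    refine ⟨hmemZ xx (by simp [hxx]), ?_⟩
    simp only [Set.mem_singleton_iff]
    intro hEq
    exact hnodupZ.1 (by rw [← hEq]
                        exact List.mem_append_left _ (List.mem_map_of_mem hxx))
  have hQ₀ : ∀ xx ∈ Q₀, xx.edge ∈ S \ {d₀.edge} := by
    intro xx hxx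
    refine ⟨hmemZ xx (by simp [hxx]), ?_⟩
    simp only [Set.mem_singleton_iff]
    intro hEq
    exact hnodupZ.1 (by rw [← hEq]
                        exact List.mem_append_right _ (List.mem_map_of_mem hxx))
  have hP₁ : ∀ xx ∈ P₁, xx.edge ∈ S \ {d₀.edge} := by
    intro xx hxx
    refine ⟨hmemN xx (by simp [hxx]), ?_⟩
    simp only [Set.mem_singleton_iff]
    intro hEq
    exact hnodupN.1 (by rw [hd₁f, ← hEq]
                        exact List.mem_append_left _ (List.mem_map_of_mem hxx))
  have hQ₁ : ∀ xx ∈ Q₁, xx.edge ∈ S \ {d₀.edge} := by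
    intro xx hxx
    refine ⟨hmemN xx (by simp [hxx]), ?_⟩
    simp only [Set.mem_singleton_iff]
    intro hEq
    exact hnodupN.1 (by rw [hd₁f, ← hEq]
                        exact List.mem_append_right _ (List.mem_map_of_mem hxx))
  obtain ⟨p, q, hpq⟩ := hstepsZ.1 d₀ (by simp)
  have hpq1 : Υ.shape d₁.edge = .link p q := by rw [hd₁f]; exact hpq
  have hgw₀ : Υ.GW (S \ {d₀.edge}) (Q₀ ++ P₀) (if d₀.fwd then q else p)
      (if d₀.fwd then p else q) :=
    Υ.closed_split hstepsZ hclosedZ hP₀ hQ₀ (Υ.srcO_of_link hpq) (Υ.tgtO_of_link hpq)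
  have hgw₁ : Υ.GW (S \ {d₀.edge}) (Q₁ ++ P₁) (if d₁.fwd then q else p)
      (if d₁.fwd then p else q) :=
    Υ.closed_split hstepsN hclosedN hP₁ hQ₁ (Υ.srcO_of_link hpq1) (Υ.tgtO_of_link hpq1)
  -- signs
  have hsgn0 : Υ.walkSign (Q₀ ++ P₀) * Υ.sign d₀.edge = 1 := by
    rw [← hsZ]
    simp only [walkSign_append, walkSign_cons]
    ac_rfl
  have hsgn1 : Υ.walkSign (Q₁ ++ P₁) * Υ.sign d₀.edge = -1 := by
    rw [← hsN]
    simp only [walkSign_append, walkSign_cons, hd₁f]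
    ac_rfl
  have hsgnL : Υ.walkSign (Q₁ ++ P₁) * Υ.walkSign (Q₀ ++ P₀) = -1 := by
    have : (Υ.walkSign (Q₁ ++ P₁) * Υ.sign d₀.edge) *
        (Υ.walkSign (Q₀ ++ P₀) * Υ.sign d₀.edge) = -1 * 1 := by rw [hsgn0, hsgn1]
    rw [show (Υ.walkSign (Q₁ ++ P₁) * Υ.sign d₀.edge) *
        (Υ.walkSign (Q₀ ++ P₀) * Υ.sign d₀.edge) =
        (Υ.walkSign (Q₁ ++ P₁) * Υ.walkSign (Q₀ ++ P₀)) *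
          (Υ.sign d₀.edge * Υ.sign d₀.edge) from by ac_rfl,
      Int.units_mul_self, mul_one] at this
    rw [this]
    simp
  -- the combined closed walk
  have hmain : ∃ (L : List (DStep E)) (w : V),
      Υ.GW (S \ {d₀.edge}) L w w ∧ Υ.walkSign L = -1 ∧ Υ.tgtO d₁ = some w := by
    rcases Υ.same_edge_ends hd₁f hpq with ⟨hse, hte⟩ | ⟨hse, hte⟩
    · -- same orientation
      have hfwd : (if d₁.fwd then q else p) = (if d₀.fwd then q else p) := by
        have h := hte
        rw [Υ.tgtO_of_link hpq1, Υ.tgtO_of_link hpq] at h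
        exact Option.some_injective _ h
      have hfwd' : (if d₁.fwd then p else q) = (if d₀.fwd then p else q) := by
        have h := hse
        rw [Υ.srcO_of_link hpq1, Υ.srcO_of_link hpq] at h
        exact Option.some_injective _ h
      refine ⟨(Q₁ ++ P₁) ++ revWalk (Q₀ ++ P₀), if d₀.fwd then q else p, ?_, ?_, ?_⟩
      · refine Υ.gw_append ?_ (Υ.gw_rev hgw₀)
        rw [← hfwd, ← hfwd']
        exact hgw₁
      · rw [walkSign_append, walkSign_revWalk]
        exact hsgnL
      · rw [Υ.tgtO_of_link hpq1, hfwd]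
    · -- opposite orientation
      have hA : (if d₁.fwd then p else q) = (if d₀.fwd then q else p) := by
        have h := hse
        rw [Υ.srcO_of_link hpq1, Υ.tgtO_of_link hpq] at h
        exact Option.some_injective _ h
      have hB : (if d₁.fwd then q else p) = (if d₀.fwd then p else q) := by
        have h := hte
        rw [Υ.tgtO_of_link hpq1, Υ.srcO_of_link hpq] at h
        exact Option.some_injective _ h
      refine ⟨(Q₁ ++ P₁) ++ (Q₀ ++ P₀), if d₀.fwd then p else q, ?_, ?_, ?_⟩
      · refine Υ.gw_append ?_ hgw₀
        rw [← hB, ← hA]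
        exact hgw₁
      · rw [walkSign_append]
        exact hsgnL
      · rw [Υ.tgtO_of_link hpq1, hB]
  obtain ⟨L, w, hgwL, hsgn, htw⟩ := hmain
  have hLne : L ≠ [] := by
    rintro rfl
    simp only [walkSign, List.map_nil, List.prod_nil] at hsgn
    exact absurd hsgn (by decide)
  obtain ⟨hhL, hlL⟩ := hgwL.2.1.2 hLne
  obtain ⟨W', hc', hs', hmem'⟩ := Υ.neg_closed_extract L.length L le_rfl hgwL.1
    (by rw [hlL, hhL]) hsgn
  obtain ⟨dh, W'', rfl⟩ := List.exists_cons_of_ne_nil hc'.1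
  obtain ⟨ph, qh, hph⟩ := hc'.2.1.1 dh (by simp)
  refine ⟨dh :: W'', hc', hs', fun d hd => hgwL.2.2 d (hmem' d hd), ?_⟩
  refine ⟨if dh.fwd then ph else qh, w, ?_, htw, ?_⟩
  · rw [Υ.headSrc_cons, Υ.srcO_of_link hph]
  · exact Υ.gw_src_conn hgwL (hmem' dh (by simp)) (Υ.srcO_of_link hph)

lemma conn_through_edge {S : Set E} {f : E} {p q x y : V} (hf : f ∈ S)
    (hpq : Υ.shape f = .link p q)
    (hx : x = p ∨ x = q) (hy : y = p ∨ y = q) : Υ.conn S x y := by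
  have hj : Υ.joined S p q := ⟨f, hf, Or.inl hpq⟩
  rcases hx with rfl | rfl <;> rcases hy with rfl | rfl
  · exact Υ.conn_refl _ _
  · exact Υ.conn_of_joined hj
  · exact Υ.conn_symm (Υ.conn_of_joined hj)
  · exact Υ.conn_refl _ _

lemma if_or {p q : V} (b : Bool) : (if b then p else q) = p ∨ (if b then p else q) = q := by
  cases b <;> simp

/-- Transfer of balancedness along a deletion which preserves connectivity,
given control over the deleted edge. -/
lemma bal_diff_standard {S : Set E} {f : E} {v : V}
    (hiff : ∀ x y, Υ.conn (S \ {f}) x y ↔ Υ.conn S x y)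
    (hhalf : ∀ h ∈ S, ∀ u, Υ.shape h = .half u → Υ.conn S v u → h ≠ f)
    (hcirc : ∀ N, Υ.IsCircleWalk N → (∀ d ∈ N, d.edge ∈ S) →
      (∃ u, Υ.headSrc N = some u ∧ Υ.conn S v u) → (∃ d ∈ N, d.edge = f) →
      Υ.walkSign N = 1)
    (hb : Υ.BalancedAt (S \ {f}) v) : Υ.BalancedAt S v := by
  constructor
  · intro h hh u hu hconn
    have hne := hhalf h hh u hu hconn
    exact hb.1 h ⟨hh, by simp [hne]⟩ u hu ((hiff v u).2 hconn)
  · intro N hN hmem hex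
    by_cases heN : ∃ d ∈ N, d.edge = f
    · exact hcirc N hN hmem hex heN
    · push_neg at heN
      obtain ⟨u, hu1, hu2⟩ := hex
      exact hb.2 N hN (fun d hd => ⟨hmem d hd, by simp [heN d hd]⟩)
        ⟨u, hu1, (hiff v u).2 hu2⟩

/-- From any sign circuit contained in `S` one can delete an edge without
changing connectivity and without creating new balanced components. -/
lemma sacrifice {S D : Set E} (hDS : D ⊆ S) (hD : Υ.SignCircuit D) :
    ∃ f ∈ D, (∀ x y, Υ.conn (S \ {f}) x y ↔ Υ.conn S x y) ∧
      ∀ v, Υ.BalancedAt (S \ {f}) v → Υ.BalancedAt S v := by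
  rcases hD with ⟨e, hsh, rfl⟩ | ⟨W, hW, rfl⟩
  · -- a loose edge
    have hnl : ∀ p q, Υ.shape e ≠ .link p q := by
      intro p q h'; rw [hsh] at h'; cases h'
    refine ⟨e, rfl, Υ.conn_diff_nonlink hnl, fun v hb => ?_⟩
    refine Υ.bal_diff_standard (Υ.conn_diff_nonlink hnl) ?_ ?_ hb
    · intro h hh u hu hconn hEq
      rw [hEq, hsh] at hu; cases hu
    · rintro N hN hmemN hex ⟨d, hd, rfl⟩
      obtain ⟨p, q, hpq⟩ := hN.2.1.1 d hd
      rw [hsh] at hpq; cases hpq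
  · have hmemsteps : ∀ d ∈ W.steps, d.edge ∈ S := fun d hd =>
      hDS (Or.inr (Or.inl (List.mem_map_of_mem hd)))
    rcases hW with hpos | hhand
    · -- positive circle
      obtain ⟨hf1, hl1, hcZ, hsZ, hhZ, hendV⟩ := hpos
      have hd₀ : W.steps.head hcZ.1 ∈ W.steps := List.head_mem _
      set d₀ := W.steps.head hcZ.1 with hd₀def
      obtain ⟨p, q, hpq⟩ := hcZ.2.1.1 d₀ hd₀
      have hiff := Υ.conn_diff_circle hcZ hmemsteps hd₀
      refine ⟨d₀.edge, Or.inr (Or.inl (List.mem_map_of_mem hd₀)), hiff, fun v hb => ?_⟩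
      refine Υ.bal_diff_standard hiff ?_ ?_ hb
      · intro h hh u hu hconn hEq
        rw [hEq, hpq] at hu; cases hu
      · rintro N hN hmemN ⟨u₀, hu₀, hconn⟩ ⟨d₁, hd₁, hd₁f⟩
        by_contra hσ
        have hσN : Υ.walkSign N = -1 := (Int.units_eq_one_or _).resolve_left hσ
        obtain ⟨W', hc', hs', hmem', u', w, hh', ht', hcw⟩ :=
          Υ.neg_circle_of_two_circles hcZ hN hmemsteps hmemN hd₀ rfl hd₁ hd₁f hsZ hσN
        obtain ⟨uN, huN, hgwN⟩ := Υ.gw_of_circle hN hmemN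
        rw [hu₀] at huN
        obtain rfl := Option.some_injective _ huN
        have hpq1 : Υ.shape d₁.edge = .link p q := by rw [hd₁f]; exact hpq
        have hx : Υ.conn S u₀ (if d₁.fwd then p else q) :=
          Υ.gw_src_conn hgwN hd₁ (Υ.srcO_of_link hpq1)
        have hj : Υ.joined S (if d₁.fwd then p else q) w :=
          Υ.gw_joined (hmemN d₁ hd₁) hpq1 (Υ.srcO_of_link hpq1) ht'
        have hvw : Υ.conn S v w := hconn.trans (hx.trans (Υ.conn_of_joined hj))
        have := hb.2 W' hc' hmem' ⟨u', hh', ((hiff v w).2 hvw).trans hcw⟩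
        rw [this] at hs'
        exact absurd hs' (by decide)
    · rcases hhand with
        ⟨W₁, P, W₂, u₁, u₂, hf1, hl1, hsteq, hIsSteps, hc1, hs1, hh1, hc2, hs2, hh2,
          hpathP, hftP, hstart, hend2, hmeet, hmeet2, hnodup⟩ |
        ⟨e₁, P, W₂, u₂, hf1, hl1, hshE1, hendV, hs1eq, hsteq, hIsSteps, hc2, hsig2, hh2,
          hpathP, hftP, hdisj2, hPe, hnodup⟩ |
        ⟨e₁, e₂, hf1, hl2, hne12, hshE1, hshE2, hs1, hs2, hpathW, hftW⟩
      · -- circle–path–circle handcuff: delete an edge of the first circle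
        have hmemW₁ : ∀ d ∈ W₁, d.edge ∈ S := fun d hd =>
          hmemsteps d (by rw [hsteq]; simp [hd])
        have hmemP : ∀ d ∈ P, d.edge ∈ S := fun d hd =>
          hmemsteps d (by rw [hsteq]; simp [hd])
        have hmemW₂ : ∀ d ∈ W₂, d.edge ∈ S := fun d hd =>
          hmemsteps d (by rw [hsteq]; simp [hd])
        have hd₀ : W₁.head hc1.1 ∈ W₁ := List.head_mem _
        set d₀ := W₁.head hc1.1 with hd₀def
        obtain ⟨p, q, hpq⟩ := hc1.2.1.1 d₀ hd₀
        have hnW₂ : ∀ d ∈ W₂, d.edge ≠ d₀.edge := by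
          intro d hd hEq
          rw [List.map_append, List.map_append, List.nodup_append] at hnodup
          exact hnodup.2.2 _ (List.mem_append_left _ (List.mem_map_of_mem hd₀))
            _ (List.mem_map_of_mem hd) hEq.symm
        have hiff := Υ.conn_diff_circle hc1 hmemW₁ hd₀
        have hfD : d₀.edge ∈ uedges W :=
          Or.inr (Or.inl (by rw [hsteq]; exact List.mem_map_of_mem (by simp [hd₀])))
        refine ⟨d₀.edge, hfD, hiff, fun v hb => ?_⟩
        refine Υ.bal_diff_standard hiff ?_ ?_ hb
        · intro h hh u hu hconn hEq
          rw [hEq, hpq] at hu; cases hu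
        · rintro N hN hmemN ⟨u₀, hu₀, hconn⟩ ⟨d₁, hd₁, hd₁f⟩
          exfalso
          -- v is connected to u₂, and W₂ is a surviving negative circle
          obtain ⟨uN, huN, hgwN⟩ := Υ.gw_of_circle hN hmemN
          rw [hu₀] at huN
          obtain rfl := Option.some_injective _ huN
          obtain ⟨uZ, huZ, hgwZ⟩ := Υ.gw_of_circle hc1 hmemW₁
          rw [hh1] at huZ
          obtain rfl := Option.some_injective _ huZ
          have hpq1 : Υ.shape d₁.edge = .link p q := by rw [hd₁f]; exact hpq
          have hx : Υ.conn S u₀ (if d₁.fwd then p else q) :=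
            Υ.gw_src_conn hgwN hd₁ (Υ.srcO_of_link hpq1)
          have hy : Υ.conn S u₁ (if d₀.fwd then p else q) :=
            Υ.gw_src_conn hgwZ hd₀ (Υ.srcO_of_link hpq)
          have hxy : Υ.conn S u₀ u₁ :=
            (hx.trans (Υ.conn_through_edge (hmemW₁ d₀ hd₀) hpq (if_or _) (if_or _))).trans
              (Υ.conn_symm hy)
          have h12 : Υ.conn S u₁ u₂ := Υ.gw_conn ⟨hpathP.1, hftP, hmemP⟩
          have hvu₂ : Υ.conn S v u₂ := (hconn.trans hxy).trans h12
          have := hb.2 W₂ hc2 (fun d hd => ⟨hmemW₂ d hd, by simp [hnW₂ d hd]⟩)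
            ⟨u₂, hh2, (hiff v u₂).2 hvu₂⟩
          rw [this] at hs2
          exact absurd hs2 (by decide)
      · -- half-edge–path–circle handcuff: delete the half edge
        have hnl : ∀ p q, Υ.shape e₁ ≠ .link p q := by
          intro p q h'; rw [hshE1] at h'; cases h'
        have hiff := Υ.conn_diff_nonlink (S := S) hnl
        have hmemP : ∀ d ∈ P, d.edge ∈ S := fun d hd =>
          hmemsteps d (by rw [hsteq]; simp [hd])
        have hmemW₂ : ∀ d ∈ W₂, d.edge ∈ S := fun d hd =>
          hmemsteps d (by rw [hsteq]; simp [hd])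
        have hnlP : ∀ d ∈ P, d.edge ≠ e₁ := by
          intro d hd hEq
          obtain ⟨p, q, hpq⟩ := hpathP.1.1 d hd
          rw [hEq, hshE1] at hpq; cases hpq
        have hnlW₂ : ∀ d ∈ W₂, d.edge ≠ e₁ := by
          intro d hd hEq
          obtain ⟨p, q, hpq⟩ := hc2.2.1.1 d hd
          rw [hEq, hshE1] at hpq; cases hpq
        refine ⟨e₁, Or.inl hf1, hiff, fun v hb => ?_⟩
        refine Υ.bal_diff_standard hiff ?_ ?_ hb
        · intro h hh u hu hconn hEq
          exfalso
          rw [hEq, hshE1] at hu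
          injection hu with hu'
          have hgwP : Υ.GW (S \ {e₁}) P W.startV u₂ :=
            ⟨hpathP.1, hftP, fun d hd => ⟨hmemP d hd, by simp [hnlP d hd]⟩⟩
          have hvs : Υ.conn S v W.startV := by rw [hu']; exact hconn
          have hconn2 : Υ.conn (S \ {e₁}) v u₂ :=
            ((hiff v W.startV).2 hvs).trans (Υ.gw_conn hgwP)
          have := hb.2 W₂ hc2 (fun d hd => ⟨hmemW₂ d hd, by simp [hnlW₂ d hd]⟩)
            ⟨u₂, hh2, hconn2⟩
          rw [this] at hsig2
          exact absurd hsig2 (by decide)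
        · rintro N hN hmemN hex ⟨d, hd, hdf⟩
          obtain ⟨p, q, hpq⟩ := hN.2.1.1 d hd
          rw [hdf, hshE1] at hpq; cases hpq
      · -- two half edges joined by a path: delete the first half edge
        have hnl : ∀ p q, Υ.shape e₁ ≠ .link p q := by
          intro p q h'; rw [hshE1] at h'; cases h'
        have hiff := Υ.conn_diff_nonlink (S := S) hnl
        have hnlW : ∀ d ∈ W.steps, d.edge ≠ e₁ := by
          intro d hd hEq
          obtain ⟨p, q, hpq⟩ := hpathW.1.1 d hd
          rw [hEq, hshE1] at hpq; cases hpq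
        refine ⟨e₁, Or.inl hf1, hiff, fun v hb => ?_⟩
        refine Υ.bal_diff_standard hiff ?_ ?_ hb
        · intro h hh u hu hconn hEq
          exfalso
          rw [hEq, hshE1] at hu
          injection hu with hu'
          have hgwP : Υ.GW (S \ {e₁}) W.steps W.startV W.endV :=
            ⟨hpathW.1, hftW, fun d hd => ⟨hmemsteps d hd, by simp [hnlW d hd]⟩⟩
          have hvs : Υ.conn S v W.startV := by rw [hu']; exact hconn
          have hconn2 : Υ.conn (S \ {e₁}) v W.endV :=
            ((hiff v W.startV).2 hvs).trans (Υ.gw_conn hgwP)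
          exact hb.1 e₂ ⟨hDS (Or.inr (Or.inr hl2)), by simp [Ne.symm hne12]⟩
            W.endV hshE2 hconn2
        · rintro N hN hmemN hex ⟨d, hd, hdf⟩
          obtain ⟨p, q, hpq⟩ := hN.2.1.1 d hd
          rw [hdf, hshE1] at hpq; cases hpq

lemma bBal_diff_le [Finite V] {S : Set E} {f : E}
    (hiff : ∀ x y, Υ.conn (S \ {f}) x y ↔ Υ.conn S x y)
    (hbal : ∀ v, Υ.BalancedAt (S \ {f}) v → Υ.BalancedAt S v) :
    Υ.bBal (S \ {f}) ≤ Υ.bBal S := by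
  rw [Υ.bBal_eq_ncard, Υ.bBal_eq_ncard]
  refine Set.ncard_le_ncard ?_ (Set.toFinite _)
  rintro X ⟨v, rfl, hb⟩
  exact ⟨v, by ext w; exact hiff v w, hbal v hb⟩

end Sacrifice

section Assembly

lemma econn_symm {S : Set E} {e f : E} (h : Υ.econn S e f) : Υ.econn S f e := by
  obtain ⟨he, hf, h'⟩ := h
  refine ⟨hf, he, ?_⟩
  rcases h' with rfl | ⟨v, w, h1, h2, h3⟩
  · exact Or.inl rfl
  · exact Or.inr ⟨w, v, h2, h1, Υ.conn_symm h3⟩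

lemma touches_conn {S : Set E} {f : E} (hf : f ∈ S) {w v' : V}
    (hw : Υ.touches f w) (hv' : Υ.touches f v') : Υ.conn S w v' := by
  unfold touches at hw hv'
  cases hsh : Υ.shape f with
  | link a b =>
    rw [hsh] at hw hv'
    exact Υ.conn_through_edge hf hsh hw hv'
  | half a =>
    rw [hsh] at hw hv'
    rw [hw, hv']
    exact Υ.conn_refl _ _
  | loose =>
    rw [hsh] at hw
    cases hw

lemma econn_trans {S : Set E} {e f g : E} (h1 : Υ.econn S e f) (h2 : Υ.econn S f g) :
    Υ.econn S e g := by
  obtain ⟨heS, hfS, hef⟩ := h1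
  obtain ⟨-, hgS, hfg⟩ := h2
  refine ⟨heS, hgS, ?_⟩
  rcases hef with rfl | ⟨v, w, hev, hfw, hvw⟩
  · exact hfg
  rcases hfg with rfl | ⟨v', w', hfv', hgw', hv'w'⟩
  · exact Or.inr ⟨v, w, hev, hfw, hvw⟩
  · exact Or.inr ⟨v, w', hev, hgw',
      (hvw.trans (Υ.touches_conn hfS hfw hfv')).trans hv'w'⟩

lemma edgeComponent_ne_disjoint {S C₁ C₂ : Set E} (h1 : Υ.EdgeComponent S C₁)
    (h2 : Υ.EdgeComponent S C₂) (hne : C₁ ≠ C₂) {g : E} (hg1 : g ∈ C₁) (hg2 : g ∈ C₂) :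
    False := by
  obtain ⟨a, haS, rfl⟩ := h1
  obtain ⟨b, hbS, rfl⟩ := h2
  apply hne
  ext x
  constructor
  · intro hx
    exact Υ.econn_trans (Υ.econn_trans hg2 (Υ.econn_symm hg1)) hx
  · intro hx
    exact Υ.econn_trans (Υ.econn_trans hg1 (Υ.econn_symm hg2)) hx

end Assembly

end GSGraph

end GSG

namespace GSG

/-- An edge set containing two distinct hyperfrustrated edge
components is dependent in `M(Υ)` (its rank is less than its cardinality). -/
theorem two_hyperfrustrated_components_dependent
    {V E G : Type*} [AddCommGroup G] [Fintype V] [Fintype E]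
    (Υ : GSGraph V E G) (hΥ : Υ.Proper) (S : Set E)
    (h : ∃ C₁ C₂ : Set E, Υ.EdgeComponent S C₁ ∧ Υ.EdgeComponent S C₂ ∧
      C₁ ≠ C₂ ∧ ¬ Υ.Hyperbalanced C₁ ∧ ¬ Υ.Hyperbalanced C₂) :
    Υ.rk S < S.ncard := by
  classical
  obtain ⟨C₁, C₂, hC₁, hC₂, hne, hH₁, hH₂⟩ := h
  have hC₁S : C₁ ⊆ S := by
    obtain ⟨a, haS, hEq⟩ := hC₁
    rw [hEq]; exact fun f hf => hf.2.1
  have hC₂S : C₂ ⊆ S := by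
    obtain ⟨a, haS, hEq⟩ := hC₂
    rw [hEq]; exact fun f hf => hf.2.1
  unfold GSGraph.Hyperbalanced at hH₁ hH₂
  push_neg at hH₁ hH₂
  obtain ⟨D₁, hD₁sub, hD₁circ, hD₁n⟩ := hH₁
  obtain ⟨D₂, hD₂sub, hD₂circ, hD₂n⟩ := hH₂
  have hnb : ¬ Υ.Hyperbalanced S := fun hb => hD₁n (hb D₁ (hD₁sub.trans hC₁S) hD₁circ)
  obtain ⟨f₁, hf₁D, hiff₁, hbal₁⟩ := Υ.sacrifice (hD₁sub.trans hC₁S) hD₁circ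
  have hf₁C₁ : f₁ ∈ C₁ := hD₁sub hf₁D
  have hf₁S : f₁ ∈ S := hC₁S hf₁C₁
  have hD₂sub' : D₂ ⊆ S \ {f₁} := by
    intro g hg
    refine ⟨hC₂S (hD₂sub hg), ?_⟩
    simp only [Set.mem_singleton_iff]
    rintro rfl
    exact Υ.edgeComponent_ne_disjoint hC₁ hC₂ hne hf₁C₁ (hD₂sub hg)
  obtain ⟨f₂, hf₂D, hiff₂, hbal₂⟩ := Υ.sacrifice hD₂sub' hD₂circ
  obtain ⟨hf₂S, hf₂ne⟩ := hD₂sub' hf₂D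
  rw [Set.mem_singleton_iff] at hf₂ne
  have hL1 := Υ.card_le_ncard_add_bBal ((S \ {f₁}) \ {f₂})
  have hb2 : Υ.bBal ((S \ {f₁}) \ {f₂}) ≤ Υ.bBal (S \ {f₁}) := Υ.bBal_diff_le hiff₂ hbal₂
  have hb1 : Υ.bBal (S \ {f₁}) ≤ Υ.bBal S := Υ.bBal_diff_le hiff₁ hbal₁
  have hpair : ({f₁, f₂} : Set E) ⊆ S := by
    intro x hx
    simp only [Set.mem_insert_iff, Set.mem_singleton_iff] at hx
    rcases hx with rfl | rfl
    exacts [hf₁S, hf₂S]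
  have hsetEq : (S \ {f₁}) \ {f₂} = S \ {f₁, f₂} := by
    rw [Set.diff_diff, Set.singleton_union]
  have hn : ((S \ {f₁}) \ {f₂}).ncard = S.ncard - 2 := by
    rw [hsetEq, Set.ncard_diff hpair (Set.toFinite _),
      Set.ncard_pair (Ne.symm hf₂ne)]
  have h2 : 2 ≤ S.ncard := by
    have := Set.ncard_le_ncard hpair (Set.toFinite _)
    rwa [Set.ncard_pair (Ne.symm hf₂ne)] at this
  have hδ : Υ.delta S = 1 := by
    unfold GSGraph.delta
    rw [if_neg hnb]
  unfold GSGraph.rk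
  rw [hδ]
  omega

end GSG
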